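/- arXiv:2604.08724 — 10 statements merged into one kernel-verified Lean document; each statement's English description precedes it below -/
import Mathlib

section
/- Let G be a group and A a nonempty subset of G. Then: (i) for every subset B of G such that the product AB is direct, |A|·|B| ≤ |G| as cardinals; (ii) for every right subfactor B of G relative to A, |G| ≤ |A⁻¹A|·|B|; (iii) every right subfactor B of G relative to A with 1 ∈ B satisfies B ⊆ (G ∖ A⁻¹A) ∪ {1}. Consequently |G:A|⁺·|A| ≤ |G| ≤ |G:A|⁻·|A⁻¹A| and |G:A|⁺ ≤ |G ∖ A⁻¹A| + 1. -/
open Pointwise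

/-- The product `A * B` is direct: every element of `A * B` has a unique
representation `a * b` with `a ∈ A`, `b ∈ B`. -/
def IsDirectProd {G : Type*} [Group G] (A B : Set G) : Prop :=
  ∀ a₁ ∈ A, ∀ b₁ ∈ B, ∀ a₂ ∈ A, ∀ b₂ ∈ B, a₁ * b₁ = a₂ * b₂ → a₁ = a₂ ∧ b₁ = b₂

/-- `B` is a right subfactor of `G` relative to `A`: `B` is inclusion-maximal
among subsets whose product with `A` (on the right) is direct. -/
def IsRightSubfactor {G : Type*} [Group G] (A B : Set G) : Prop :=
  IsDirectProd A B ∧ ∀ B' : Set G, B ⊆ B' → IsDirectProd A B' → B' = B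

/-- The right upper subindex `|G:A|⁺`. -/
noncomputable def rUpperIndex {G : Type*} [Group G] (A : Set G) : Cardinal :=
  sSup {c | ∃ B : Set G, IsRightSubfactor A B ∧ c = Cardinal.mk ↥B}

/-- The right lower subindex `|G:A|⁻`. -/
noncomputable def rLowerIndex {G : Type*} [Group G] (A : Set G) : Cardinal :=
  sInf {c | ∃ B : Set G, IsRightSubfactor A B ∧ c = Cardinal.mk ↥B}

/-- A bounded nonempty set of cardinals with finite supremum attains it. -/
lemma aux_csSup_mem {S : Set Cardinal} (hne : S.Nonempty) (hb : BddAbove S)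
    (h : sSup S < Cardinal.aleph0) : sSup S ∈ S := by
  obtain ⟨n, hn⟩ := Cardinal.lt_aleph0.mp h
  have hfin : S.Finite := by
    apply Set.Finite.subset ((Set.finite_Iic n).image (Nat.cast : ℕ → Cardinal))
    intro c hc
    have hcn : c ≤ (n : Cardinal) := hn ▸ le_csSup hb hc
    obtain ⟨m, rfl⟩ := Cardinal.lt_aleph0.mp (lt_of_le_of_lt hcn (Cardinal.nat_lt_aleph0 n))
    exact ⟨m, Nat.cast_le.mp hcn, rfl⟩
  exact hne.csSup_mem hfin

/-- (i) -/
lemma aux_direct_card {G : Type*} [Group G] {A B : Set G} (h : IsDirectProd A B) :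
    Cardinal.mk ↥A * Cardinal.mk ↥B ≤ Cardinal.mk G := by
  have hinj : Function.Injective (fun p : ↥A × ↥B => (p.1 : G) * (p.2 : G)) := by
    rintro ⟨⟨a₁, ha₁⟩, ⟨b₁, hb₁⟩⟩ ⟨⟨a₂, ha₂⟩, ⟨b₂, hb₂⟩⟩ heq
    obtain ⟨h1, h2⟩ := h a₁ ha₁ b₁ hb₁ a₂ ha₂ b₂ hb₂ heq
    simp_all
  calc Cardinal.mk ↥A * Cardinal.mk ↥B = Cardinal.mk (↥A × ↥B) := by
        rw [Cardinal.mk_prod]; simp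
    _ ≤ Cardinal.mk G := Cardinal.mk_le_of_injective hinj

/-- (ii) -/
lemma aux_cover_card {G : Type*} [Group G] {A B : Set G} (hA : A.Nonempty)
    (h : IsRightSubfactor A B) :
    Cardinal.mk G ≤ Cardinal.mk ↥(A⁻¹ * A) * Cardinal.mk ↥B := by
  obtain ⟨hd, hmax⟩ := h
  have hone : (1 : G) ∈ A⁻¹ * A := by
    obtain ⟨a, ha⟩ := hA
    exact ⟨a⁻¹, Set.inv_mem_inv.mpr ha, a, ha, inv_mul_cancel a⟩
  have hsurj : ∀ g : G, ∃ x ∈ A⁻¹ * A, ∃ b ∈ B, x * b = g := by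
    intro g
    by_contra hcon
    push_neg at hcon
    have key : ∀ a₁ ∈ A, ∀ b₁ ∈ B, ∀ a₂ ∈ A, a₁ * b₁ ≠ a₂ * g := by
      intro a₁ ha₁ b₁ hb₁ a₂ ha₂ heq
      refine hcon (a₂⁻¹ * a₁) ⟨a₂⁻¹, Set.inv_mem_inv.mpr ha₂, a₁, ha₁, rfl⟩ b₁ hb₁ ?_
      rw [mul_assoc, heq]
      group
    have hdir' : IsDirectProd A (insert g B) := by
      rintro a₁ ha₁ b₁ hb₁ a₂ ha₂ b₂ hb₂ heq
      rcases Set.mem_insert_iff.mp hb₁ with hb₁ | hb₁ <;>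
        rcases Set.mem_insert_iff.mp hb₂ with hb₂ | hb₂
      · rw [hb₁, hb₂] at heq
        exact ⟨mul_right_cancel heq, hb₁.trans hb₂.symm⟩
      · exact absurd (by rw [← hb₁]; exact heq.symm) (key a₂ ha₂ b₂ hb₂ a₁ ha₁)
      · exact absurd (by rw [← hb₂]; exact heq) (key a₁ ha₁ b₁ hb₁ a₂ ha₂)
      · exact hd a₁ ha₁ b₁ hb₁ a₂ ha₂ b₂ hb₂ heq
    have : insert g B = B := hmax _ (Set.subset_insert g B) hdir'
    have hgB : g ∈ B := this ▸ Set.mem_insert g B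
    exact hcon 1 hone g hgB (one_mul g)
  have hs : Function.Surjective (fun p : ↥(A⁻¹ * A) × ↥B => (p.1 : G) * (p.2 : G)) := by
    intro g
    obtain ⟨x, hx, b, hb, hxb⟩ := hsurj g
    exact ⟨⟨⟨x, hx⟩, ⟨b, hb⟩⟩, hxb⟩
  calc Cardinal.mk G ≤ Cardinal.mk (↥(A⁻¹ * A) × ↥B) := Cardinal.mk_le_of_surjective hs
    _ = Cardinal.mk ↥(A⁻¹ * A) * Cardinal.mk ↥B := by rw [Cardinal.mk_prod]; simp

/-- translation into the complement -/
lemma aux_mem_compl {G : Type*} [Group G] {A B : Set G} (hd : IsDirectProd A B)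
    {b₀ : G} (hb₀ : b₀ ∈ B) : ∀ b ∈ B, b * b₀⁻¹ ∈ (A⁻¹ * A)ᶜ ∪ {1} := by
  intro b hb
  by_cases hmem : b * b₀⁻¹ ∈ A⁻¹ * A
  · right
    obtain ⟨x, hx, y, hy, hxy⟩ := hmem
    have hx' : x⁻¹ ∈ A := Set.mem_inv.mp hx
    have hxy' : x * y = b * b₀⁻¹ := hxy
    have heq : y * b₀ = x⁻¹ * b := by
      have h2 : x * y * b₀ = b := by rw [hxy']; group
      rw [← h2]; group
    obtain ⟨h1, h2⟩ := hd y hy b₀ hb₀ x⁻¹ hx' b hb heq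
    simp [← h2]
  · exact Or.inl hmem

lemma aux_card_subfactor {G : Type*} [Group G] {A B : Set G}
    (h : IsRightSubfactor A B) :
    Cardinal.mk ↥B ≤ Cardinal.mk ↥((A⁻¹ * A)ᶜ) + 1 := by
  obtain ⟨hd, hmax⟩ := h
  rcases B.eq_empty_or_nonempty with rfl | ⟨b₀, hb₀⟩
  · exfalso
    have hdir : IsDirectProd A ({1} : Set G) := by
      rintro a₁ ha₁ b₁ hb₁ a₂ ha₂ b₂ hb₂ heq
      rw [Set.mem_singleton_iff] at hb₁ hb₂
      subst hb₁; subst hb₂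
      exact ⟨mul_right_cancel heq, rfl⟩
    exact Set.singleton_ne_empty (1 : G) (hmax {1} (Set.empty_subset _) hdir)
  · have hinj : Function.Injective
        (fun b : ↥B => (⟨(b : G) * b₀⁻¹, aux_mem_compl hd hb₀ b b.2⟩ :
          ↥((A⁻¹ * A)ᶜ ∪ {1}))) := by
      rintro ⟨b₁, hb₁⟩ ⟨b₂, hb₂⟩ heq
      simp only [Subtype.mk.injEq] at heq ⊢
      exact mul_right_cancel heq
    calc Cardinal.mk ↥B ≤ Cardinal.mk ↥((A⁻¹ * A)ᶜ ∪ {1} : Set G) :=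
          Cardinal.mk_le_of_injective hinj
      _ ≤ Cardinal.mk ↥((A⁻¹ * A)ᶜ) + Cardinal.mk ↥({1} : Set G) := Cardinal.mk_union_le _ _
      _ = Cardinal.mk ↥((A⁻¹ * A)ᶜ) + 1 := by rw [Cardinal.mk_singleton]

/-- existence of right subfactors, by Zorn -/
lemma aux_exists_subfactor {G : Type*} [Group G] (A : Set G) :
    ∃ B : Set G, IsRightSubfactor A B := by
  obtain ⟨B, hB⟩ := zorn_subset {B : Set G | IsDirectProd A B} (by
    intro c hc hchain
    refine ⟨⋃₀ c, ?_, fun s hs => Set.subset_sUnion_of_mem hs⟩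
    rintro a₁ ha₁ b₁ hb₁ a₂ ha₂ b₂ hb₂ heq
    obtain ⟨S₁, hS₁, hb₁'⟩ := hb₁
    obtain ⟨S₂, hS₂, hb₂'⟩ := hb₂
    rcases hchain.total hS₁ hS₂ with hsub | hsub
    · exact hc hS₂ a₁ ha₁ b₁ (hsub hb₁') a₂ ha₂ b₂ hb₂' heq
    · exact hc hS₁ a₁ ha₁ b₁ hb₁' a₂ ha₂ b₂ (hsub hb₂') heq)
  exact ⟨B, hB.prop, fun B' hsub hdir => hB.eq_of_ge hdir hsub⟩

theorem stmt0 {G : Type*} [Group G] (A : Set G) (hA : A.Nonempty) :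
    (∀ B : Set G, IsDirectProd A B → Cardinal.mk ↥A * Cardinal.mk ↥B ≤ Cardinal.mk G) ∧
    (∀ B : Set G, IsRightSubfactor A B →
      Cardinal.mk G ≤ Cardinal.mk ↥(A⁻¹ * A) * Cardinal.mk ↥B) ∧
    (∀ B : Set G, IsRightSubfactor A B → (1 : G) ∈ B → B ⊆ (A⁻¹ * A)ᶜ ∪ {1}) ∧
    rUpperIndex A * Cardinal.mk ↥A ≤ Cardinal.mk G ∧
    Cardinal.mk G ≤ rLowerIndex A * Cardinal.mk ↥(A⁻¹ * A) ∧
    rUpperIndex A ≤ Cardinal.mk ↥((A⁻¹ * A)ᶜ) + 1 := by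
  have hA1 : (1 : Cardinal) ≤ Cardinal.mk ↥A := by
    rw [Cardinal.one_le_iff_ne_zero]
    exact Cardinal.mk_ne_zero_iff.mpr hA.to_subtype
  set S : Set Cardinal := {c | ∃ B : Set G, IsRightSubfactor A B ∧ c = Cardinal.mk ↥B} with hS
  have hSne : S.Nonempty := by
    obtain ⟨B, hB⟩ := aux_exists_subfactor A
    exact ⟨Cardinal.mk ↥B, B, hB, rfl⟩
  have hub : ∀ c ∈ S, c * Cardinal.mk ↥A ≤ Cardinal.mk G := by
    rintro c ⟨B, hB, rfl⟩
    rw [mul_comm]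
    exact aux_direct_card hB.1
  have hub' : ∀ c ∈ S, c ≤ Cardinal.mk G := by
    intro c hc
    calc c = c * 1 := (mul_one c).symm
      _ ≤ c * Cardinal.mk ↥A := mul_le_mul_right hA1 c
      _ ≤ Cardinal.mk G := hub c hc
  have hbdd : BddAbove S := ⟨Cardinal.mk G, hub'⟩
  refine ⟨fun B hB => aux_direct_card hB, fun B hB => aux_cover_card hA hB, ?_, ?_, ?_, ?_⟩
  · intro B hB h1 b hb
    have := aux_mem_compl hB.1 h1 b hb
    simpa using this
  · -- upper index bound
    rw [rUpperIndex, ← hS]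
    rcases lt_or_ge (sSup S) Cardinal.aleph0 with hfin | hinf
    · exact hub _ (aux_csSup_mem hSne hbdd hfin)
    · have hne0 : Cardinal.mk ↥A ≠ 0 := by positivity
      rw [Cardinal.mul_eq_max_of_aleph0_le_left hinf hne0]
      exact max_le (csSup_le hSne hub') (Cardinal.mk_set_le A)
  · -- lower index bound
    rw [rLowerIndex, ← hS]
    obtain ⟨B, hB, hBc⟩ := csInf_mem hSne
    rw [hBc, mul_comm]
    exact aux_cover_card hA hB
  · -- last bound
    rw [rUpperIndex, ← hS]
    apply csSup_le hSne
    rintro c ⟨B, hB, rfl⟩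
    exact aux_card_subfactor hB
end

section
/- Let G be a group, A a nonempty subset of G, C(A) = G ∖ A⁻¹A and C¹(A) = C(A) ∪ {1}. The following are equivalent: (a) C¹(A) is a subgroup of G; (b) C¹(A) is a right subfactor of G relative to A; (c) C(A)C(A) ⊆ C¹(A); (d) the set of right subfactors of G relative to A containing 1 equals {C¹(A)}; (e) the set of right subfactors of G relative to A containing 1 is a singleton; (f) the product A·C¹(A) is direct. Moreover, each of these conditions implies |G:A|⁺ = |C(A)| + 1, and if A⁻¹A is cofinite in G then the equality |G:A|⁺ = |C(A)| + 1 is equivalent to them. -/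
open Pointwise

/-- `C(A) = G ∖ A⁻¹A`. -/
def Cset {G : Type*} [Group G] (A : Set G) : Set G := (A⁻¹ * A)ᶜ

/-- `C¹(A) = C(A) ∪ {1}`. -/
def Cset1 {G : Type*} [Group G] (A : Set G) : Set G := Cset A ∪ {1}

section aux
variable {G : Type*} [Group G] {A B : Set G}

lemma directProd_iff :
    IsDirectProd A B ↔ ∀ b₁ ∈ B, ∀ b₂ ∈ B, b₁ * b₂⁻¹ ∈ A⁻¹ * A → b₁ = b₂ := by
  constructor
  · intro h b₁ hb₁ b₂ hb₂ hmem
    rw [Set.mem_mul] at hmem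
    obtain ⟨x, hx, y, hy, hxy⟩ := hmem
    have hxA : x⁻¹ ∈ A := Set.mem_inv.mp hx
    have h2 : y * b₂ = x⁻¹ * b₁ := by
      have : x * (y * b₂) = b₁ := by
        rw [← mul_assoc, hxy, inv_mul_cancel_right]
      rw [← this, ← mul_assoc, inv_mul_cancel, one_mul]
    exact ((h y hy b₂ hb₂ x⁻¹ hxA b₁ hb₁ h2).2).symm
  · intro h a₁ ha₁ b₁ hb₁ a₂ ha₂ b₂ hb₂ heq
    have key : b₁ * b₂⁻¹ = a₁⁻¹ * a₂ := by
      have := congrArg (fun z => a₁⁻¹ * z * b₂⁻¹) heq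
      simpa [mul_assoc] using this
    have hb : b₁ = b₂ := by
      refine h b₁ hb₁ b₂ hb₂ ?_
      rw [key]
      exact Set.mul_mem_mul (Set.inv_mem_inv.mpr ha₁) ha₂
    subst hb
    exact ⟨mul_right_cancel heq, rfl⟩

lemma one_mem_D (hA : A.Nonempty) : (1 : G) ∈ A⁻¹ * A := by
  obtain ⟨a, ha⟩ := hA
  exact ⟨a⁻¹, Set.inv_mem_inv.mpr ha, a, ha, inv_mul_cancel a⟩

lemma D_inv_mem {x : G} (hx : x ∈ A⁻¹ * A) : x⁻¹ ∈ A⁻¹ * A := by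
  rw [Set.mem_mul] at hx ⊢
  obtain ⟨u, hu, v, hv, huv⟩ := hx
  exact ⟨v⁻¹, Set.inv_mem_inv.mpr hv, u⁻¹, Set.mem_inv.mp hu, by rw [← mul_inv_rev, huv]⟩

lemma Cset_inv_mem {x : G} (hx : x ∈ Cset A) : x⁻¹ ∈ Cset A :=
  fun h => hx (by simpa using D_inv_mem h)

lemma one_mem_Cset1 : (1 : G) ∈ Cset1 A := Or.inr rfl

lemma Cset1_inv_mem {x : G} (hx : x ∈ Cset1 A) : x⁻¹ ∈ Cset1 A := by
  rcases hx with h | h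
  · exact Or.inl (Cset_inv_mem h)
  · simp [Set.mem_singleton_iff.mp h, Cset1]

lemma one_notMem_Cset (hA : A.Nonempty) : (1 : G) ∉ Cset A := fun h => h (one_mem_D hA)

lemma subset_Cset1 (hd : IsDirectProd A B) (h1 : (1 : G) ∈ B) : B ⊆ Cset1 A := by
  intro b hb
  by_cases hb1 : b = 1
  · exact hb1 ▸ one_mem_Cset1
  · left
    intro hbD
    exact hb1 (directProd_iff.mp hd b hb 1 h1 (by simpa using hbD))

lemma max_of_direct (hd : IsDirectProd A (Cset1 A)) : IsRightSubfactor A (Cset1 A) :=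
  ⟨hd, fun _B' hsub hd' =>
    subset_antisymm (subset_Cset1 hd' (hsub one_mem_Cset1)) hsub⟩

lemma exists_subfactor (hd : IsDirectProd A B) :
    ∃ M : Set G, B ⊆ M ∧ IsRightSubfactor A M := by
  obtain ⟨m, hBm, hmax⟩ := zorn_subset_nonempty {B' : Set G | IsDirectProd A B'}
    (fun c hcS hchain _hne => by
      refine ⟨⋃₀ c, ?_, fun s hs => Set.subset_sUnion_of_mem hs⟩
      intro a₁ ha₁ b₁ hb₁ a₂ ha₂ b₂ hb₂ heq
      obtain ⟨s₁, hs₁, hb₁'⟩ := hb₁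
      obtain ⟨s₂, hs₂, hb₂'⟩ := hb₂
      rcases eq_or_ne s₁ s₂ with rfl | hne
      · exact hcS hs₁ a₁ ha₁ b₁ hb₁' a₂ ha₂ b₂ hb₂' heq
      · rcases hchain hs₁ hs₂ hne with hle | hle
        · exact hcS hs₂ a₁ ha₁ b₁ (hle hb₁') a₂ ha₂ b₂ hb₂' heq
        · exact hcS hs₁ a₁ ha₁ b₁ hb₁' a₂ ha₂ b₂ (hle hb₂') heq) B hd
  exact ⟨m, hBm, hmax.1, fun B' hsub hd' => subset_antisymm (hmax.2 hd' hsub) hsub⟩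

lemma direct_translate (hd : IsDirectProd A B) (g : G) :
    IsDirectProd A ((· * g) '' B) := by
  rw [directProd_iff] at hd ⊢
  rintro _ ⟨b₁, hb₁, rfl⟩ _ ⟨b₂, hb₂, rfl⟩ hmem
  have : b₁ * b₂⁻¹ ∈ A⁻¹ * A := by
    simpa [mul_inv_rev, mul_assoc] using hmem
  rw [hd b₁ hb₁ b₂ hb₂ this]

lemma card_le_of_direct (hd : IsDirectProd A B) :
    Cardinal.mk ↥B ≤ Cardinal.mk ↥(Cset1 A) := by
  rcases B.eq_empty_or_nonempty with rfl | ⟨b₀, hb₀⟩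
  · simp
  · have hB' : ((· * b₀⁻¹) '' B) ⊆ Cset1 A :=
      subset_Cset1 (direct_translate hd b₀⁻¹) ⟨b₀, hb₀, mul_inv_cancel b₀⟩
    calc Cardinal.mk ↥B = Cardinal.mk ↥((· * b₀⁻¹) '' B) :=
          (Cardinal.mk_image_eq (mul_left_injective b₀⁻¹)).symm
      _ ≤ Cardinal.mk ↥(Cset1 A) := Cardinal.mk_le_mk_of_subset hB'

lemma mk_Cset1 (hA : A.Nonempty) :
    Cardinal.mk ↥(Cset1 A) = Cardinal.mk ↥(Cset A) + 1 := by
  rw [Cset1, Set.union_singleton, Cardinal.mk_insert (one_notMem_Cset hA)]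

lemma direct_one : IsDirectProd A {1} := by
  intro a₁ ha₁ b₁ hb₁ a₂ ha₂ b₂ hb₂ heq
  simp only [Set.mem_singleton_iff] at hb₁ hb₂
  subst hb₁; subst hb₂
  exact ⟨by simpa using heq, rfl⟩

lemma direct_pair {c : G} (hc : c ∈ Cset A) : IsDirectProd A {1, c} := by
  rw [directProd_iff]
  intro b₁ hb₁ b₂ hb₂ hmem
  simp only [Set.mem_insert_iff, Set.mem_singleton_iff] at hb₁ hb₂
  rcases hb₁ with rfl | rfl <;> rcases hb₂ with rfl | rfl
  · rfl
  · exact absurd (by simpa using hmem) (Cset_inv_mem hc)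
  · exact absurd (by simpa using hmem) hc
  · rfl

lemma P_iff_direct :
    (∃ H : Subgroup G, (H : Set G) = Cset1 A) ↔ IsDirectProd A (Cset1 A) := by
  constructor
  · rintro ⟨H, hH⟩
    rw [directProd_iff]
    intro b₁ hb₁ b₂ hb₂ hmem
    rw [← hH] at hb₁ hb₂
    have hprod : b₁ * b₂⁻¹ ∈ (H : Set G) := H.mul_mem hb₁ (H.inv_mem hb₂)
    rw [hH] at hprod
    rcases hprod with hcm | h1
    · exact absurd hmem hcm
    · exact mul_inv_eq_one.mp (Set.mem_singleton_iff.mp h1)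
  · intro hd
    refine ⟨{ carrier := Cset1 A
              one_mem' := one_mem_Cset1
              inv_mem' := fun hx => Cset1_inv_mem hx
              mul_mem' := ?_ }, rfl⟩
    intro x y hx hy
    by_contra hxy
    have hyi : y⁻¹ ∈ Cset1 A := Cset1_inv_mem hy
    have hD : x * (y⁻¹)⁻¹ ∈ A⁻¹ * A := by
      rw [inv_inv]
      by_contra hD
      exact hxy (Or.inl hD)
    have hxe := directProd_iff.mp hd x hx y⁻¹ hyi hD
    subst hxe
    exact hxy (by simpa using (one_mem_Cset1 (A := A)))

end aux

theorem stmt1 {G : Type*} [Group G] (A : Set G) (hA : A.Nonempty) :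
    ((∃ H : Subgroup G, (H : Set G) = Cset1 A) ↔ IsRightSubfactor A (Cset1 A)) ∧
    ((∃ H : Subgroup G, (H : Set G) = Cset1 A) ↔ Cset A * Cset A ⊆ Cset1 A) ∧
    ((∃ H : Subgroup G, (H : Set G) = Cset1 A) ↔
      {B : Set G | IsRightSubfactor A B ∧ (1 : G) ∈ B} = {Cset1 A}) ∧
    ((∃ H : Subgroup G, (H : Set G) = Cset1 A) ↔
      ∃ B₀ : Set G, {B : Set G | IsRightSubfactor A B ∧ (1 : G) ∈ B} = {B₀}) ∧
    ((∃ H : Subgroup G, (H : Set G) = Cset1 A) ↔ IsDirectProd A (Cset1 A)) ∧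
    ((∃ H : Subgroup G, (H : Set G) = Cset1 A) →
      rUpperIndex A = Cardinal.mk ↥(Cset A) + 1) ∧
    ((Cset A).Finite →
      (rUpperIndex A = Cardinal.mk ↥(Cset A) + 1 ↔ ∃ H : Subgroup G, (H : Set G) = Cset1 A)) := by
  -- (a) ↔ (f)
  have hPf : (∃ H : Subgroup G, (H : Set G) = Cset1 A) ↔ IsDirectProd A (Cset1 A) :=
    P_iff_direct
  -- (a) ↔ (b)
  have hPb : (∃ H : Subgroup G, (H : Set G) = Cset1 A) ↔ IsRightSubfactor A (Cset1 A) :=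
    ⟨fun h => max_of_direct (hPf.1 h), fun h => hPf.2 h.1⟩
  -- (a) ↔ (c)
  have hPc : (∃ H : Subgroup G, (H : Set G) = Cset1 A) ↔ Cset A * Cset A ⊆ Cset1 A := by
    constructor
    · rintro ⟨H, hH⟩ z hz
      rw [Set.mem_mul] at hz
      obtain ⟨c₁, h₁, c₂, h₂, rfl⟩ := hz
      rw [← hH]
      have m₁ : c₁ ∈ (H : Set G) := by rw [hH]; exact Or.inl h₁
      have m₂ : c₂ ∈ (H : Set G) := by rw [hH]; exact Or.inl h₂
      exact H.mul_mem m₁ m₂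
    · intro hCC
      refine ⟨{ carrier := Cset1 A
                one_mem' := one_mem_Cset1
                inv_mem' := fun hx => Cset1_inv_mem hx
                mul_mem' := ?_ }, rfl⟩
      intro x y hx hy
      rcases hx with hx | hx
      · rcases hy with hy | hy
        · exact hCC (Set.mul_mem_mul hx hy)
        · rw [Set.mem_singleton_iff.mp hy, mul_one]; exact Or.inl hx
      · rw [Set.mem_singleton_iff.mp hx, one_mul]; exact hy
  -- (a) ↔ (d)
  have hPd : (∃ H : Subgroup G, (H : Set G) = Cset1 A) ↔
      {B : Set G | IsRightSubfactor A B ∧ (1 : G) ∈ B} = {Cset1 A} := by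
    constructor
    · intro hP
      have hd := hPf.1 hP
      ext B
      simp only [Set.mem_setOf_eq, Set.mem_singleton_iff]
      constructor
      · rintro ⟨hsf, h1⟩
        exact (hsf.2 (Cset1 A) (subset_Cset1 hsf.1 h1) hd).symm
      · rintro rfl
        exact ⟨max_of_direct hd, one_mem_Cset1⟩
    · intro h
      have hmem : Cset1 A ∈ {B : Set G | IsRightSubfactor A B ∧ (1 : G) ∈ B} := by
        rw [h]; rfl
      exact hPf.2 hmem.1.1
  -- (a) ↔ (e)
  have hPe : (∃ H : Subgroup G, (H : Set G) = Cset1 A) ↔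
      ∃ B₀ : Set G, {B : Set G | IsRightSubfactor A B ∧ (1 : G) ∈ B} = {B₀} := by
    constructor
    · intro hP; exact ⟨Cset1 A, hPd.1 hP⟩
    · rintro ⟨B₀, hB₀⟩
      have hB₀mem : B₀ ∈ {B : Set G | IsRightSubfactor A B ∧ (1 : G) ∈ B} := by
        rw [hB₀]; rfl
      have hB₀sub : B₀ ⊆ Cset1 A := subset_Cset1 hB₀mem.1.1 hB₀mem.2
      have hC1sub : Cset1 A ⊆ B₀ := by
        intro c hc
        rcases hc with hc | hc
        · obtain ⟨N, hN, hNsf⟩ := exists_subfactor (direct_pair hc)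
          have hN1 : (1 : G) ∈ N := hN (Or.inl rfl)
          have hNB : N = B₀ := by
            have : N ∈ {B : Set G | IsRightSubfactor A B ∧ (1 : G) ∈ B} := ⟨hNsf, hN1⟩
            rwa [hB₀, Set.mem_singleton_iff] at this
          exact hNB ▸ hN (Or.inr rfl)
        · exact (Set.mem_singleton_iff.mp hc) ▸ hB₀mem.2
      have heq : Cset1 A = B₀ := subset_antisymm hC1sub hB₀sub
      exact hPf.2 (heq ▸ hB₀mem.1.1)
  -- (g)
  have hg : (∃ H : Subgroup G, (H : Set G) = Cset1 A) →
      rUpperIndex A = Cardinal.mk ↥(Cset A) + 1 := by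
    intro hP
    have hd := hPf.1 hP
    have hG : IsGreatest {c | ∃ B : Set G, IsRightSubfactor A B ∧ c = Cardinal.mk ↥B}
        (Cardinal.mk ↥(Cset1 A)) := by
      constructor
      · exact ⟨Cset1 A, max_of_direct hd, rfl⟩
      · rintro c ⟨B, hB, rfl⟩
        exact card_le_of_direct hB.1
    rw [rUpperIndex, hG.csSup_eq, mk_Cset1 hA]
  refine ⟨hPb, hPc, hPd, hPe, hPf, hg, ?_⟩
  -- (h)
  intro hC
  refine ⟨?_, hg⟩
  intro heq
  have hSne : {c | ∃ B : Set G, IsRightSubfactor A B ∧ c = Cardinal.mk ↥B}.Nonempty := by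
    obtain ⟨M, _, hM⟩ := exists_subfactor (direct_one (A := A))
    exact ⟨Cardinal.mk ↥M, M, hM, rfl⟩
  obtain ⟨n, hn⟩ : ∃ n : ℕ, Cardinal.mk ↥(Cset A) = n := by
    exact Cardinal.lt_aleph0.mp (Cardinal.lt_aleph0_iff_set_finite.mpr hC)
  have hmkC1 : Cardinal.mk ↥(Cset1 A) = ((n + 1 : ℕ) : Cardinal) := by
    rw [mk_Cset1 hA, hn]; push_cast; ring
  have hmem : Cardinal.mk ↥(Cset1 A) ∈
      {c | ∃ B : Set G, IsRightSubfactor A B ∧ c = Cardinal.mk ↥B} := by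
    by_contra hnm
    have hub : ∀ c ∈ {c | ∃ B : Set G, IsRightSubfactor A B ∧ c = Cardinal.mk ↥B},
        c ≤ (n : Cardinal) := by
      rintro c ⟨B, hB, rfl⟩
      have hle : Cardinal.mk ↥B ≤ Cardinal.mk ↥(Cset1 A) := card_le_of_direct hB.1
      have hne : Cardinal.mk ↥B ≠ Cardinal.mk ↥(Cset1 A) := by
        intro h
        exact hnm (h ▸ (⟨B, hB, rfl⟩ :
          Cardinal.mk ↥B ∈ {c | ∃ B : Set G, IsRightSubfactor A B ∧ c = Cardinal.mk ↥B}))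
      have hlt : Cardinal.mk ↥B < ((n + 1 : ℕ) : Cardinal) :=
        hmkC1 ▸ lt_of_le_of_ne hle hne
      obtain ⟨m, hm⟩ := Cardinal.lt_aleph0.mp (hlt.trans (Cardinal.nat_lt_aleph0 _))
      rw [hm] at hlt ⊢
      have : m < n + 1 := by exact_mod_cast hlt
      exact_mod_cast Nat.lt_succ_iff.mp this
    have hsup : rUpperIndex A ≤ (n : Cardinal) := csSup_le hSne hub
    rw [heq, hn] at hsup
    have : n + 1 ≤ n := by exact_mod_cast hsup
    omega
  obtain ⟨B, hBsf, hBcard⟩ := hmem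
  have hC1fin : (Cset1 A).Finite := hC.union (Set.finite_singleton 1)
  have hBne : B.Nonempty := by
    rw [← Set.nonempty_coe_sort, ← Cardinal.mk_ne_zero_iff, ← hBcard]
    have : Nonempty ↥(Cset1 A) := ⟨⟨1, one_mem_Cset1⟩⟩
    exact Cardinal.mk_ne_zero _
  obtain ⟨b₀, hb₀⟩ := hBne
  have hd' := direct_translate hBsf.1 b₀⁻¹
  have h1B' : (1 : G) ∈ (· * b₀⁻¹) '' B := ⟨b₀, hb₀, mul_inv_cancel b₀⟩
  have hsub : ((· * b₀⁻¹) '' B) ⊆ Cset1 A := subset_Cset1 hd' h1B'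
  have hcard' : Cardinal.mk ↥((· * b₀⁻¹) '' B) = Cardinal.mk ↥(Cset1 A) :=
    (Cardinal.mk_image_eq (mul_left_injective b₀⁻¹)).trans hBcard.symm
  have hBeq : ((· * b₀⁻¹) '' B) = Cset1 A := by
    refine Set.eq_of_subset_of_ncard_le hsub ?_ hC1fin
    have hnc : ((· * b₀⁻¹) '' B).ncard = (Cset1 A).ncard := by
      rw [← Nat.card_coe_set_eq, ← Nat.card_coe_set_eq]
      simp only [Nat.card]
      rw [hcard']
    omega
  exact hPf.2 (hBeq ▸ hd')
end

section
/- Let G be a group, H a subgroup of G, and H^c = G ∖ H its set-theoretic complement. Then the setwise product H^c H^c equals ∅ if H = G, equals H if the index [G:H] = 2, and equals G if [G:H] > 2. Consequently H^c is index stable in G, with |G:H^c| = |G| if H = G, |G:H^c| = 2 if [G:H] = 2, and |G:H^c| = 1 if [G:H] > 2. -/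
open Pointwise

/-- `B` is a left subfactor of `G` relative to `A`. -/
def IsLeftSubfactor {G : Type*} [Group G] (A B : Set G) : Prop :=
  IsDirectProd B A ∧ ∀ B' : Set G, B ⊆ B' → IsDirectProd B' A → B' = B

/-- The left upper subindex `|G:A|₊`. -/
noncomputable def lUpperIndex {G : Type*} [Group G] (A : Set G) : Cardinal :=
  sSup {c | ∃ B : Set G, IsLeftSubfactor A B ∧ c = Cardinal.mk ↥B}

/-- The left lower subindex `|G:A|₋`. -/
noncomputable def lLowerIndex {G : Type*} [Group G] (A : Set G) : Cardinal :=
  sInf {c | ∃ B : Set G, IsLeftSubfactor A B ∧ c = Cardinal.mk ↥B}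

/-- `A` is index stable in `G` with index `κ`: all four subindices equal `κ`. -/
def IsIndexStableWith {G : Type*} [Group G] (A : Set G) (κ : Cardinal) : Prop :=
  rUpperIndex A = κ ∧ rLowerIndex A = κ ∧ lUpperIndex A = κ ∧ lLowerIndex A = κ

/-! ### Auxiliary lemmas -/

section Aux

lemma aux_eq_of_two {α : Type*} (h : Cardinal.mk α = 2) {a b c : α}
    (ha : a ≠ c) (hb : b ≠ c) : a = b := by
  obtain ⟨x, y, hxy, hset⟩ := Cardinal.mk_eq_two_iff.mp h
  have hall : ∀ z : α, z = x ∨ z = y := fun z => by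
    have : z ∈ ({x, y} : Set α) := hset ▸ Set.mem_univ z
    simpa using this
  rcases hall a with rfl | rfl <;> rcases hall b with rfl | rfl <;>
    rcases hall c with rfl | rfl <;> tauto

lemma aux_exists_third {α : Type*} (h : 2 < Cardinal.mk α) (x y : α) :
    ∃ z, z ≠ x ∧ z ≠ y := by
  by_contra hc
  push_neg at hc
  have hsub : (Set.univ : Set α) ⊆ ({x, y} : Set α) := by
    intro z _
    by_cases hz : z = x
    · exact Or.inl hz
    · exact Or.inr (hc z hz)
  have h2 : Cardinal.mk α ≤ 2 := by
    calc Cardinal.mk α = Cardinal.mk (Set.univ : Set α) := Cardinal.mk_univ.symm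
      _ ≤ Cardinal.mk ({x, y} : Set α) := Cardinal.mk_le_mk_of_subset hsub
      _ ≤ Cardinal.mk ({y} : Set α) + 1 := Cardinal.mk_insert_le
      _ = 2 := by rw [Cardinal.mk_singleton]; exact one_add_one_eq_two
  exact absurd h (not_lt.mpr h2)

variable {G : Type*} [Group G] (H : Subgroup G)

lemma aux_inv_mem_comp {x : G} (hx : x ∈ ((H : Set G)ᶜ)) : x⁻¹ ∈ ((H : Set G)ᶜ) := by
  simp only [Set.mem_compl_iff, SetLike.mem_coe] at *
  exact fun h => hx (by simpa using H.inv_mem h)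

lemma aux_exists_not_mem (h : 1 < Cardinal.mk (G ⧸ H)) : ∃ g : G, g ∉ H := by
  have : Nontrivial (G ⧸ H) := Cardinal.one_lt_iff_nontrivial.mp h
  obtain ⟨x, y, hxy⟩ := this
  refine ⟨x.out⁻¹ * y.out, fun hm => hxy ?_⟩
  rw [← x.out_eq', ← y.out_eq']
  exact QuotientGroup.eq.mpr (by simpa using hm)

lemma aux_prod_two (h2 : Cardinal.mk (G ⧸ H) = 2) :
    (H : Set G)ᶜ * (H : Set G)ᶜ = (H : Set G) := by
  apply Set.Subset.antisymm
  · rintro g ⟨x, hx, y, hy, rfl⟩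
    simp only [Set.mem_compl_iff, SetLike.mem_coe] at hx hy
    have hx1 : ((x⁻¹ : G) : G ⧸ H) ≠ ((1 : G) : G ⧸ H) := fun hh => by
      have := QuotientGroup.eq.mp hh
      simp only [inv_inv, mul_one] at this
      exact hx this
    have hy1 : ((y : G) : G ⧸ H) ≠ ((1 : G) : G ⧸ H) := fun hh => by
      have := QuotientGroup.eq.mp hh
      rw [mul_one] at this
      exact hy (by simpa using H.inv_mem this)
    have hxy : ((x⁻¹ : G) : G ⧸ H) = ((y : G) : G ⧸ H) := aux_eq_of_two h2 hx1 hy1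
    have := QuotientGroup.eq.mp hxy
    simpa using this
  · intro h hh
    obtain ⟨g, hg⟩ := aux_exists_not_mem H (by rw [h2]; norm_num)
    refine ⟨g⁻¹, ?_, g * h, ?_, by group⟩
    · simp only [Set.mem_compl_iff, SetLike.mem_coe]
      exact fun hc => hg (by simpa using H.inv_mem hc)
    · simp only [Set.mem_compl_iff, SetLike.mem_coe]
      intro hc
      exact hg (by simpa using H.mul_mem hc (H.inv_mem hh))

lemma aux_prod_gt_two (h2 : 2 < Cardinal.mk (G ⧸ H)) :
    (H : Set G)ᶜ * (H : Set G)ᶜ = Set.univ := by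
  apply Set.eq_univ_of_forall
  intro g
  obtain ⟨z, hz1, hzg⟩ := aux_exists_third h2 ((1 : G) : G ⧸ H) ((g : G) : G ⧸ H)
  set a := z.out with ha
  have haz : ((a : G) : G ⧸ H) = z := z.out_eq'
  have ha1 : a ∉ H := fun hm => hz1 (by rw [← haz]; exact QuotientGroup.eq.mpr (by simpa using H.inv_mem hm))
  have hag : a⁻¹ * g ∉ H := fun hm => hzg (by rw [← haz]; exact QuotientGroup.eq.mpr hm)
  exact ⟨a, by simpa using ha1, a⁻¹ * g, by simpa using hag, by group⟩

/-! ### Case `H = ⊤` -/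

lemma aux_top_right (hB : IsRightSubfactor ((⊤ : Subgroup G) : Set G)ᶜ B) : B = Set.univ := by
  have h1 : ((⊤ : Subgroup G) : Set G)ᶜ = (∅ : Set G) := by simp
  have := hB.2 Set.univ (Set.subset_univ B) (by rw [h1]; intro a₁ ha₁; cases ha₁)
  exact this.symm ▸ rfl

lemma aux_top_left (hB : IsLeftSubfactor ((⊤ : Subgroup G) : Set G)ᶜ B) : B = Set.univ := by
  have h1 : ((⊤ : Subgroup G) : Set G)ᶜ = (∅ : Set G) := by simp
  have := hB.2 Set.univ (Set.subset_univ B) (by rw [h1]; intro b₁ _ a₁ ha₁; cases ha₁)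
  exact this.symm ▸ rfl

/-! ### Index-two case -/

-- From right-directness: elements of `B` in the same right coset coincide.
lemma aux_eq_of_dir_right {B : Set G} (hne : ∃ a : G, a ∉ H)
    (hd : IsDirectProd ((H : Set G)ᶜ) B) {b₁ b₂ : G} (hb₁ : b₁ ∈ B) (hb₂ : b₂ ∈ B)
    (h : b₁ * b₂⁻¹ ∈ H) : b₁ = b₂ := by
  obtain ⟨a, ha⟩ := hne
  have haC : a ∈ ((H : Set G)ᶜ) := by simpa using ha
  have haC' : a * (b₁ * b₂⁻¹) ∈ ((H : Set G)ᶜ) := by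
    simp only [Set.mem_compl_iff, SetLike.mem_coe]
    intro hc
    have hm2 : b₂ * b₁⁻¹ ∈ H := by simpa using H.inv_mem h
    have h3 := H.mul_mem hc hm2
    rw [show a * (b₁ * b₂⁻¹) * (b₂ * b₁⁻¹) = a from by group] at h3
    exact ha h3
  exact ((hd _ haC' b₂ hb₂ a haC b₁ hb₁ (by group)).2).symm

lemma aux_dir_right_of (h2 : Cardinal.mk (G ⧸ H) = 2) {B : Set G}
    (hB : ∀ b₁ ∈ B, ∀ b₂ ∈ B, b₁ * b₂⁻¹ ∈ H → b₁ = b₂) :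
    IsDirectProd ((H : Set G)ᶜ) B := by
  intro a₁ ha₁ b₁ hb₁ a₂ ha₂ b₂ hb₂ heq
  have hmem : a₂⁻¹ * a₁ ∈ H := by
    have : a₂⁻¹ * a₁ ∈ (H : Set G)ᶜ * (H : Set G)ᶜ :=
      ⟨a₂⁻¹, aux_inv_mem_comp H ha₂, a₁, ha₁, rfl⟩
    rwa [aux_prod_two H h2] at this
  have hrel : b₂ * b₁⁻¹ ∈ H := by
    have he : a₂⁻¹ * a₁ = b₂ * b₁⁻¹ := by
      rw [eq_comm, ← mul_inv_eq_iff_eq_mul] at heq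
      group at heq ⊢
      rw [← heq]; group
    rwa [he] at hmem
  have hb : b₂ = b₁ := hB b₂ hb₂ b₁ hb₁ hrel
  subst hb
  exact ⟨mul_right_cancel heq, rfl⟩

lemma aux_right_two_card (h2 : Cardinal.mk (G ⧸ H) = 2) {B : Set G}
    (hB : IsRightSubfactor ((H : Set G)ᶜ) B) : Cardinal.mk B = 2 := by
  have hne : ∃ a : G, a ∉ H := aux_exists_not_mem H (by rw [h2]; norm_num)
  set f : B → G ⧸ H := fun b => (((b : G)⁻¹ : G) : G ⧸ H) with hf
  have hinj : Function.Injective f := by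
    intro b₁ b₂ hfe
    have hm : (b₁ : G) * (b₂ : G)⁻¹ ∈ H := by
      have := QuotientGroup.eq.mp hfe
      simpa using this
    exact Subtype.ext (aux_eq_of_dir_right H hne hB.1 b₁.2 b₂.2 hm)
  have hsurj : Function.Surjective f := by
    intro q
    by_contra hq
    push_neg at hq
    set c : G := q.out⁻¹ with hc
    have hcq : (((c : G)⁻¹ : G) : G ⧸ H) = q := by
      rw [hc, inv_inv]; exact q.out_eq'
    have hdir : IsDirectProd ((H : Set G)ᶜ) (insert c B) := by
      apply aux_dir_right_of H h2
      intro b₁ hb₁ b₂ hb₂ hmul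
      rcases hb₁ with rfl | hb₁ <;> rcases hb₂ with rfl | hb₂
      · rfl
      · exfalso
        apply hq ⟨b₂, hb₂⟩
        show (((b₂ : G)⁻¹ : G) : G ⧸ H) = q
        rw [← hcq]
        exact QuotientGroup.eq.mpr (by simpa using H.inv_mem hmul)
      · exfalso
        apply hq ⟨b₁, hb₁⟩
        show (((b₁ : G)⁻¹ : G) : G ⧸ H) = q
        rw [← hcq]
        exact QuotientGroup.eq.mpr (by simpa using hmul)
      · exact aux_eq_of_dir_right H hne hB.1 hb₁ hb₂ hmul
    have heq : insert c B = B := hB.2 _ (Set.subset_insert c B) hdir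
    have hcB : c ∈ B := heq ▸ Set.mem_insert c B
    exact hq ⟨c, hcB⟩ hcq
  calc Cardinal.mk B = Cardinal.mk (G ⧸ H) :=
        Cardinal.mk_congr (Equiv.ofBijective f ⟨hinj, hsurj⟩)
    _ = 2 := h2

lemma aux_right_two_exists (h2 : Cardinal.mk (G ⧸ H) = 2) :
    ∃ B : Set G, IsRightSubfactor ((H : Set G)ᶜ) B := by
  obtain ⟨g, hg⟩ := aux_exists_not_mem H (by rw [h2]; norm_num)
  have hne : ∃ a : G, a ∉ H := ⟨g, hg⟩
  refine ⟨{1, g}, ?_, ?_⟩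
  · apply aux_dir_right_of H h2
    intro b₁ hb₁ b₂ hb₂ hmul
    rcases hb₁ with rfl | rfl <;> rcases hb₂ with rfl | rfl
    · rfl
    · exact absurd (by simpa using H.inv_mem hmul) hg
    · exact absurd (by simpa using hmul) hg
    · rfl
  · intro B' hsub hdir
    apply Set.Subset.antisymm _ hsub
    intro b hb
    have h1B : (1 : G) ∈ B' := hsub (Set.mem_insert 1 {g})
    have hgB : g ∈ B' := hsub (by simp)
    by_cases hcase : b * g⁻¹ ∈ H
    · have := aux_eq_of_dir_right H hne hdir hb hgB hcase
      simp [this]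
    · have hbH : b ∈ H := by
        by_contra hbH
        have hb1 : (((b⁻¹ : G)) : G ⧸ H) ≠ (((g⁻¹ : G)) : G ⧸ H) := fun hh =>
          hcase (by simpa using QuotientGroup.eq.mp hh)
        have h11 : (((1 : G)) : G ⧸ H) ≠ (((g⁻¹ : G)) : G ⧸ H) := fun hh => by
          have := QuotientGroup.eq.mp hh
          exact hg (by simpa using H.inv_mem (by simpa using this))
        have := aux_eq_of_two h2 hb1 h11
        have := QuotientGroup.eq.mp this
        exact hbH (by simpa using this)
      have := aux_eq_of_dir_right H hne hdir hb h1B (by simpa using hbH)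
      simp [this]

-- Left versions.
lemma aux_eq_of_dir_left {B : Set G} (hne : ∃ a : G, a ∉ H)
    (hd : IsDirectProd B ((H : Set G)ᶜ)) {b₁ b₂ : G} (hb₁ : b₁ ∈ B) (hb₂ : b₂ ∈ B)
    (h : b₂⁻¹ * b₁ ∈ H) : b₁ = b₂ := by
  obtain ⟨a, ha⟩ := hne
  have haC : a ∈ ((H : Set G)ᶜ) := by simpa using ha
  have haC' : (b₂⁻¹ * b₁) * a ∈ ((H : Set G)ᶜ) := by
    simp only [Set.mem_compl_iff, SetLike.mem_coe]
    intro hc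
    have h3 := H.mul_mem (H.inv_mem h) hc
    rw [show (b₂⁻¹ * b₁)⁻¹ * (b₂⁻¹ * b₁ * a) = a from by group] at h3
    exact ha h3
  exact (hd b₁ hb₁ a haC b₂ hb₂ _ haC' (by group)).1

lemma aux_dir_left_of (h2 : Cardinal.mk (G ⧸ H) = 2) {B : Set G}
    (hB : ∀ b₁ ∈ B, ∀ b₂ ∈ B, b₂⁻¹ * b₁ ∈ H → b₁ = b₂) :
    IsDirectProd B ((H : Set G)ᶜ) := by
  intro b₁ hb₁ a₁ ha₁ b₂ hb₂ a₂ ha₂ heq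
  have hmem : a₂ * a₁⁻¹ ∈ H := by
    have : a₂ * a₁⁻¹ ∈ (H : Set G)ᶜ * (H : Set G)ᶜ :=
      ⟨a₂, ha₂, a₁⁻¹, aux_inv_mem_comp H ha₁, rfl⟩
    rwa [aux_prod_two H h2] at this
  have hrel : b₂⁻¹ * b₁ ∈ H := by
    have he : a₂ * a₁⁻¹ = b₂⁻¹ * b₁ := by
      have : b₂⁻¹ * (b₁ * a₁) * a₁⁻¹ = b₂⁻¹ * (b₂ * a₂) * a₁⁻¹ := by rw [heq]
      group at this ⊢
      exact this.symm
    rwa [he] at hmem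
  have hb : b₁ = b₂ := hB b₁ hb₁ b₂ hb₂ hrel
  subst hb
  exact ⟨rfl, mul_left_cancel heq⟩

lemma aux_left_two_card (h2 : Cardinal.mk (G ⧸ H) = 2) {B : Set G}
    (hB : IsLeftSubfactor ((H : Set G)ᶜ) B) : Cardinal.mk B = 2 := by
  have hne : ∃ a : G, a ∉ H := aux_exists_not_mem H (by rw [h2]; norm_num)
  set f : B → G ⧸ H := fun b => (((b : G)) : G ⧸ H) with hf
  have hinj : Function.Injective f := by
    intro b₁ b₂ hfe
    have hm : (b₂ : G)⁻¹ * (b₁ : G) ∈ H := QuotientGroup.eq.mp hfe.symm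
    exact Subtype.ext (aux_eq_of_dir_left H hne hB.1 b₁.2 b₂.2 hm)
  have hsurj : Function.Surjective f := by
    intro q
    by_contra hq
    push_neg at hq
    set c : G := q.out with hc
    have hcq : ((c : G) : G ⧸ H) = q := q.out_eq'
    have hdir : IsDirectProd (insert c B) ((H : Set G)ᶜ) := by
      apply aux_dir_left_of H h2
      intro b₁ hb₁ b₂ hb₂ hmul
      rcases hb₁ with rfl | hb₁ <;> rcases hb₂ with rfl | hb₂
      · rfl
      · exfalso
        apply hq ⟨b₂, hb₂⟩
        show ((b₂ : G) : G ⧸ H) = q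
        rw [← hcq]
        refine QuotientGroup.eq.mpr ?_
        have := H.inv_mem hmul
        rwa [mul_inv_rev, inv_inv] at this
      · exfalso
        apply hq ⟨b₁, hb₁⟩
        show ((b₁ : G) : G ⧸ H) = q
        rw [← hcq]
        exact QuotientGroup.eq.mpr (by simpa using H.inv_mem hmul)
      · exact aux_eq_of_dir_left H hne hB.1 hb₁ hb₂ hmul
    have heq : insert c B = B := hB.2 _ (Set.subset_insert c B) hdir
    have hcB : c ∈ B := heq ▸ Set.mem_insert c B
    exact hq ⟨c, hcB⟩ hcq
  calc Cardinal.mk B = Cardinal.mk (G ⧸ H) :=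
        Cardinal.mk_congr (Equiv.ofBijective f ⟨hinj, hsurj⟩)
    _ = 2 := h2

lemma aux_left_two_exists (h2 : Cardinal.mk (G ⧸ H) = 2) :
    ∃ B : Set G, IsLeftSubfactor ((H : Set G)ᶜ) B := by
  obtain ⟨g, hg⟩ := aux_exists_not_mem H (by rw [h2]; norm_num)
  have hne : ∃ a : G, a ∉ H := ⟨g, hg⟩
  refine ⟨{1, g}, ?_, ?_⟩
  · apply aux_dir_left_of H h2
    intro b₁ hb₁ b₂ hb₂ hmul
    rcases hb₁ with rfl | rfl <;> rcases hb₂ with rfl | rfl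
    · rfl
    · exact absurd (by simpa using hmul) hg
    · exact absurd (by simpa using H.inv_mem hmul) hg
    · rfl
  · intro B' hsub hdir
    apply Set.Subset.antisymm _ hsub
    intro b hb
    have h1B : (1 : G) ∈ B' := hsub (Set.mem_insert 1 {g})
    have hgB : g ∈ B' := hsub (by simp)
    by_cases hcase : g⁻¹ * b ∈ H
    · have := aux_eq_of_dir_left H hne hdir hb hgB hcase
      simp [this]
    · have hbH : b ∈ H := by
        by_contra hbH
        have hb1 : ((b : G) : G ⧸ H) ≠ (((g : G)) : G ⧸ H) := fun hh =>
          hcase (by simpa using H.inv_mem (QuotientGroup.eq.mp hh))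
        have h11 : (((1 : G)) : G ⧸ H) ≠ (((g : G)) : G ⧸ H) := fun hh =>
          hg (by simpa using QuotientGroup.eq.mp hh)
        have := aux_eq_of_two h2 hb1 h11
        have := QuotientGroup.eq.mp this
        exact hbH (by simpa using H.inv_mem this)
      have := aux_eq_of_dir_left H hne hdir hb h1B (by simpa using hbH)
      simp [this]

/-! ### Index greater than two -/

lemma aux_dir_subsingleton_right (h2 : 2 < Cardinal.mk (G ⧸ H)) {B : Set G}
    (hd : IsDirectProd ((H : Set G)ᶜ) B) : ∀ b₁ ∈ B, ∀ b₂ ∈ B, b₁ = b₂ := by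
  intro b₁ hb₁ b₂ hb₂
  have hmem : b₂ * b₁⁻¹ ∈ (H : Set G)ᶜ * (H : Set G)ᶜ := by
    rw [aux_prod_gt_two H h2]; trivial
  simp only [Set.mem_mul] at hmem
  obtain ⟨u, hu, v, hv, huv⟩ := hmem
  have hb2 : b₂ = u * v * b₁ := by rw [huv]; group
  have := hd v hv b₁ hb₁ u⁻¹ (aux_inv_mem_comp H hu) b₂ hb₂ (by rw [hb2]; group)
  exact this.2

lemma aux_dir_subsingleton_left (h2 : 2 < Cardinal.mk (G ⧸ H)) {B : Set G}
    (hd : IsDirectProd B ((H : Set G)ᶜ)) : ∀ b₁ ∈ B, ∀ b₂ ∈ B, b₁ = b₂ := by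
  intro b₁ hb₁ b₂ hb₂
  have hmem : b₂⁻¹ * b₁ ∈ (H : Set G)ᶜ * (H : Set G)ᶜ := by
    rw [aux_prod_gt_two H h2]; trivial
  simp only [Set.mem_mul] at hmem
  obtain ⟨u, hu, v, hv, huv⟩ := hmem
  have hb1 : b₁ = b₂ * (u * v) := by rw [huv]; group
  have := hd b₁ hb₁ v⁻¹ (aux_inv_mem_comp H hv) b₂ hb₂ u hu (by rw [hb1]; group)
  exact this.1

lemma aux_dir_singleton_right (x : G) : IsDirectProd ((H : Set G)ᶜ) ({x} : Set G) := by
  intro a₁ _ b₁ hb₁ a₂ _ b₂ hb₂ heq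
  rcases hb₁ with rfl
  rcases hb₂ with rfl
  exact ⟨mul_right_cancel heq, rfl⟩

lemma aux_dir_singleton_left (x : G) : IsDirectProd ({x} : Set G) ((H : Set G)ᶜ) := by
  intro b₁ hb₁ a₁ _ b₂ hb₂ a₂ _ heq
  rcases hb₁ with rfl
  rcases hb₂ with rfl
  exact ⟨rfl, mul_left_cancel heq⟩

lemma aux_right_gt_two (h2 : 2 < Cardinal.mk (G ⧸ H)) {B : Set G} :
    IsRightSubfactor ((H : Set G)ᶜ) B ↔ ∃ x : G, B = {x} := by
  constructor
  · rintro ⟨hd, hmax⟩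
    have hss := aux_dir_subsingleton_right H h2 hd
    have hnonempty : B.Nonempty := by
      by_contra hne
      rw [Set.not_nonempty_iff_eq_empty] at hne
      subst hne
      have := hmax {1} (Set.empty_subset _) (aux_dir_singleton_right H 1)
      simpa using this
    obtain ⟨x, hx⟩ := hnonempty
    refine ⟨x, Set.eq_singleton_iff_unique_mem.mpr ⟨hx, fun b hb => hss b hb x hx⟩⟩
  · rintro ⟨x, rfl⟩
    refine ⟨aux_dir_singleton_right H x, fun B' hsub hdir => ?_⟩
    have hss := aux_dir_subsingleton_right H h2 hdir
    have hx : x ∈ B' := hsub rfl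
    exact Set.eq_singleton_iff_unique_mem.mpr ⟨hx, fun b hb => hss b hb x hx⟩

lemma aux_left_gt_two (h2 : 2 < Cardinal.mk (G ⧸ H)) {B : Set G} :
    IsLeftSubfactor ((H : Set G)ᶜ) B ↔ ∃ x : G, B = {x} := by
  constructor
  · rintro ⟨hd, hmax⟩
    have hss := aux_dir_subsingleton_left H h2 hd
    have hnonempty : B.Nonempty := by
      by_contra hne
      rw [Set.not_nonempty_iff_eq_empty] at hne
      subst hne
      have := hmax {1} (Set.empty_subset _) (aux_dir_singleton_left H 1)
      simpa using this
    obtain ⟨x, hx⟩ := hnonempty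
    refine ⟨x, Set.eq_singleton_iff_unique_mem.mpr ⟨hx, fun b hb => hss b hb x hx⟩⟩
  · rintro ⟨x, rfl⟩
    refine ⟨aux_dir_singleton_left H x, fun B' hsub hdir => ?_⟩
    have hss := aux_dir_subsingleton_left H h2 hdir
    have hx : x ∈ B' := hsub rfl
    exact Set.eq_singleton_iff_unique_mem.mpr ⟨hx, fun b hb => hss b hb x hx⟩

end Aux

theorem stmt2 {G : Type*} [Group G] (H : Subgroup G) :
    (H = ⊤ → (H : Set G)ᶜ * (H : Set G)ᶜ = ∅) ∧
    (Cardinal.mk (G ⧸ H) = 2 → (H : Set G)ᶜ * (H : Set G)ᶜ = (H : Set G)) ∧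
    (2 < Cardinal.mk (G ⧸ H) → (H : Set G)ᶜ * (H : Set G)ᶜ = Set.univ) ∧
    (H = ⊤ → IsIndexStableWith ((H : Set G)ᶜ) (Cardinal.mk G)) ∧
    (Cardinal.mk (G ⧸ H) = 2 → IsIndexStableWith ((H : Set G)ᶜ) 2) ∧
    (2 < Cardinal.mk (G ⧸ H) → IsIndexStableWith ((H : Set G)ᶜ) 1) := by
  refine ⟨?_, aux_prod_two H, aux_prod_gt_two H, ?_, ?_, ?_⟩
  · rintro rfl
    simp
  · rintro rfl
    have hRS : {c | ∃ B : Set G, IsRightSubfactor (((⊤ : Subgroup G) : Set G)ᶜ) B ∧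
        c = Cardinal.mk ↥B} = {Cardinal.mk G} := by
      ext c
      simp only [Set.mem_setOf_eq, Set.mem_singleton_iff]
      constructor
      · rintro ⟨B, hB, rfl⟩
        rw [aux_top_right hB, Cardinal.mk_univ]
      · rintro rfl
        refine ⟨Set.univ, ⟨?_, fun B' hsub _ => Set.Subset.antisymm (Set.subset_univ B') hsub⟩,
          Cardinal.mk_univ.symm⟩
        intro a₁ ha₁
        exact absurd ha₁ (by simp)
    have hLS : {c | ∃ B : Set G, IsLeftSubfactor (((⊤ : Subgroup G) : Set G)ᶜ) B ∧
        c = Cardinal.mk ↥B} = {Cardinal.mk G} := by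
      ext c
      simp only [Set.mem_setOf_eq, Set.mem_singleton_iff]
      constructor
      · rintro ⟨B, hB, rfl⟩
        rw [aux_top_left hB, Cardinal.mk_univ]
      · rintro rfl
        refine ⟨Set.univ, ⟨?_, fun B' hsub _ => Set.Subset.antisymm (Set.subset_univ B') hsub⟩,
          Cardinal.mk_univ.symm⟩
        intro b₁ _ a₁ ha₁
        exact absurd ha₁ (by simp)
    refine ⟨?_, ?_, ?_, ?_⟩
    · rw [rUpperIndex, hRS, csSup_singleton]
    · rw [rLowerIndex, hRS, csInf_singleton]
    · rw [lUpperIndex, hLS, csSup_singleton]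
    · rw [lLowerIndex, hLS, csInf_singleton]
  · intro h2
    have hRS : {c | ∃ B : Set G, IsRightSubfactor ((H : Set G)ᶜ) B ∧
        c = Cardinal.mk ↥B} = {2} := by
      ext c
      simp only [Set.mem_setOf_eq, Set.mem_singleton_iff]
      constructor
      · rintro ⟨B, hB, rfl⟩
        exact aux_right_two_card H h2 hB
      · rintro rfl
        obtain ⟨B, hB⟩ := aux_right_two_exists H h2
        exact ⟨B, hB, (aux_right_two_card H h2 hB).symm⟩
    have hLS : {c | ∃ B : Set G, IsLeftSubfactor ((H : Set G)ᶜ) B ∧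
        c = Cardinal.mk ↥B} = {2} := by
      ext c
      simp only [Set.mem_setOf_eq, Set.mem_singleton_iff]
      constructor
      · rintro ⟨B, hB, rfl⟩
        exact aux_left_two_card H h2 hB
      · rintro rfl
        obtain ⟨B, hB⟩ := aux_left_two_exists H h2
        exact ⟨B, hB, (aux_left_two_card H h2 hB).symm⟩
    refine ⟨?_, ?_, ?_, ?_⟩
    · rw [rUpperIndex, hRS, csSup_singleton]
    · rw [rLowerIndex, hRS, csInf_singleton]
    · rw [lUpperIndex, hLS, csSup_singleton]
    · rw [lLowerIndex, hLS, csInf_singleton]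
  · intro h2
    have hRS : {c | ∃ B : Set G, IsRightSubfactor ((H : Set G)ᶜ) B ∧
        c = Cardinal.mk ↥B} = {1} := by
      ext c
      simp only [Set.mem_setOf_eq, Set.mem_singleton_iff]
      constructor
      · rintro ⟨B, hB, rfl⟩
        obtain ⟨x, rfl⟩ := (aux_right_gt_two H h2).mp hB
        exact Cardinal.mk_singleton x
      · rintro rfl
        exact ⟨{1}, (aux_right_gt_two H h2).mpr ⟨1, rfl⟩, (Cardinal.mk_singleton 1).symm⟩
    have hLS : {c | ∃ B : Set G, IsLeftSubfactor ((H : Set G)ᶜ) B ∧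
        c = Cardinal.mk ↥B} = {1} := by
      ext c
      simp only [Set.mem_setOf_eq, Set.mem_singleton_iff]
      constructor
      · rintro ⟨B, hB, rfl⟩
        obtain ⟨x, rfl⟩ := (aux_left_gt_two H h2).mp hB
        exact Cardinal.mk_singleton x
      · rintro rfl
        exact ⟨{1}, (aux_left_gt_two H h2).mpr ⟨1, rfl⟩, (Cardinal.mk_singleton 1).symm⟩
    refine ⟨?_, ?_, ?_, ?_⟩
    · rw [rUpperIndex, hRS, csSup_singleton]
    · rw [rLowerIndex, hRS, csInf_singleton]
    · rw [lUpperIndex, hLS, csSup_singleton]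
    · rw [lLowerIndex, hLS, csInf_singleton]
end

section
/- Let G be a group, H a subgroup of G, and A ⊆ H. Then, as cardinals, |G:A|⁻ = [G:H]·|H:A|⁻ and |G:A|⁺ = [G:H]·|H:A|⁺, where [G:H] is the index of H in G and |H:A|^± are the right subindices of A computed with H as the ambient group. In particular, for every subset A of G one has |G:A|⁻ = [G:⟨A⟩]·|⟨A⟩:A|⁻ and |G:A|⁺ = [G:⟨A⟩]·|⟨A⟩:A|⁺. -/
open Pointwise

/-- `B` is a right subfactor of the subgroup `H` relative to `A ⊆ H`:
`B` is a subset of `H` maximal among subsets of `H` with `A * B` direct. -/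
def IsRightSubfactorIn {G : Type*} [Group G] (H : Subgroup G) (A B : Set G) : Prop :=
  B ⊆ (H : Set G) ∧ IsDirectProd A B ∧
    ∀ B' : Set G, B' ⊆ (H : Set G) → B ⊆ B' → IsDirectProd A B' → B' = B

/-- The right upper subindex `|H:A|⁺` computed with `H` as ambient group. -/
noncomputable def rUpperIndexIn {G : Type*} [Group G] (H : Subgroup G) (A : Set G) : Cardinal :=
  sSup {c | ∃ B : Set G, IsRightSubfactorIn H A B ∧ c = Cardinal.mk ↥B}

/-- The right lower subindex `|H:A|⁻` computed with `H` as ambient group. -/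
noncomputable def rLowerIndexIn {G : Type*} [Group G] (H : Subgroup G) (A : Set G) : Cardinal :=
  sInf {c | ∃ B : Set G, IsRightSubfactorIn H A B ∧ c = Cardinal.mk ↥B}

section Aux

variable {G : Type*} [Group G]

private lemma directProd_sUnion {A : Set G} {𝒞 : Set (Set G)}
    (hchain : IsChain (· ⊆ ·) 𝒞) (h : ∀ C ∈ 𝒞, IsDirectProd A C) :
    IsDirectProd A (⋃₀ 𝒞) := by
  rintro a₁ ha₁ b₁ hb₁ a₂ ha₂ b₂ hb₂ heq
  obtain ⟨C₁, hC₁, hb₁'⟩ := hb₁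
  obtain ⟨C₂, hC₂, hb₂'⟩ := hb₂
  rcases hchain.total hC₁ hC₂ with hs | hs
  · exact h C₂ hC₂ a₁ ha₁ b₁ (hs hb₁') a₂ ha₂ b₂ hb₂' heq
  · exact h C₁ hC₁ a₁ ha₁ b₁ hb₁' a₂ ha₂ b₂ (hs hb₂') heq

private lemma exists_subfactorIn (H : Subgroup G) (A : Set G) :
    ∃ B, IsRightSubfactorIn H A B := by
  obtain ⟨B, hBmem, hBmax⟩ := zorn_subset {C : Set G | C ⊆ (H : Set G) ∧ IsDirectProd A C}
    (fun c hcS hchain => ⟨⋃₀ c,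
      ⟨fun x hx => by obtain ⟨C, hC, hxC⟩ := hx; exact (hcS hC).1 hxC,
        directProd_sUnion hchain fun C hC => (hcS hC).2⟩,
      fun s hs => Set.subset_sUnion_of_mem hs⟩)
  exact ⟨B, hBmem.1, hBmem.2, fun B' hB'H hBB' hB'dir =>
    le_antisymm (hBmax ⟨hB'H, hB'dir⟩ hBB') hBB'⟩

private lemma subfactorIn_nonempty {H : Subgroup G} {A B : Set G}
    (h : IsRightSubfactorIn H A B) : B.Nonempty := by
  rcases Set.eq_empty_or_nonempty B with hB | hB
  · exfalso
    have h1 : ({1} : Set G) = B := by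
      refine h.2.2 {1} (by simp [H.one_mem]) (by simp [hB]) ?_
      rintro a₁ ha₁ b₁ hb₁ a₂ ha₂ b₂ hb₂ heq
      simp only [Set.mem_singleton_iff] at hb₁ hb₂
      subst hb₁; subst hb₂
      exact ⟨by simpa using heq, rfl⟩
    rw [hB] at h1
    simp at h1
  · exact hB

private lemma mul_csSup_le {κ t : Cardinal} {S : Set Cardinal} (hκ : 1 ≤ κ)
    (hS : S.Nonempty) (h1 : ∀ c ∈ S, 1 ≤ c) (ht : ∀ c ∈ S, κ * c ≤ t) :
    κ * sSup S ≤ t := by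
  by_cases hbdd : BddAbove S
  swap
  · rw [csSup_of_not_bddAbove hbdd, csSup_empty]
    have hz : κ * (⊥ : Cardinal) = 0 := by simp
    rw [hz]
    exact zero_le
  by_cases hmem : ∃ c ∈ S, sSup S ≤ c
  · obtain ⟨c, hc, hsc⟩ := hmem
    exact le_trans (mul_le_mul' le_rfl hsc) (ht c hc)
  push_neg at hmem
  have hsinf : Cardinal.aleph0 ≤ sSup S := by
    by_contra hfin
    push_neg at hfin
    obtain ⟨n, hn⟩ := Cardinal.lt_aleph0.mp hfin
    obtain ⟨c₀, hc₀⟩ := hS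
    have hn1 : 1 ≤ n := by
      by_contra hn1
      push_neg at hn1
      interval_cases n
      · have := (h1 c₀ hc₀).trans_lt ((hmem c₀ hc₀).trans_le hn.le)
        simp at this
    have : sSup S ≤ (↑(n - 1) : Cardinal) := by
      apply csSup_le ⟨c₀, hc₀⟩
      intro c hc
      have hcn : c < (n : Cardinal) := (hmem c hc).trans_le hn.le
      obtain ⟨m, hm⟩ := Cardinal.lt_aleph0.mp (hcn.trans (Cardinal.nat_lt_aleph0 n))
      subst hm
      have : m < n := by exact_mod_cast hcn
      exact_mod_cast Nat.le_sub_one_of_lt this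
    rw [hn] at this
    have : (n : Cardinal) ≤ (↑(n - 1) : Cardinal) := this
    have : n ≤ n - 1 := by exact_mod_cast this
    omega
  have hsle : sSup S ≤ t := csSup_le hS fun c hc => le_trans
    (by calc c = 1 * c := (one_mul c).symm
        _ ≤ κ * c := mul_le_mul' hκ le_rfl) (ht c hc)
  rcases le_total κ (sSup S) with hks | hks
  · calc κ * sSup S ≤ max (max κ (sSup S)) Cardinal.aleph0 := Cardinal.mul_le_max _ _
      _ = sSup S := by rw [max_eq_right hks, max_eq_left hsinf]
      _ ≤ t := hsle
  · have hκinf : Cardinal.aleph0 ≤ κ := hsinf.trans hks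
    obtain ⟨c, hc⟩ := hS
    calc κ * sSup S ≤ max (max κ (sSup S)) Cardinal.aleph0 := Cardinal.mul_le_max _ _
      _ = κ := by rw [max_eq_left hks, max_eq_left hκinf]
      _ = κ * 1 := (mul_one κ).symm
      _ ≤ κ * c := mul_le_mul' le_rfl (h1 c hc)
      _ ≤ t := ht c hc

end Aux

section Main

variable {G : Type*} [Group G]

private lemma mk_rightRel_eq (H : Subgroup G) (x y : G) :
    (Quotient.mk (QuotientGroup.rightRel H) x = Quotient.mk (QuotientGroup.rightRel H) y)
      ↔ y * x⁻¹ ∈ H := by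
  rw [Quotient.eq]
  exact QuotientGroup.rightRel_apply

private lemma mk_rightRel_mul (H : Subgroup G) {h : G} (x : G) (hh : h ∈ H) :
    Quotient.mk (QuotientGroup.rightRel H) (h * x) = Quotient.mk (QuotientGroup.rightRel H) x := by
  rw [mk_rightRel_eq]
  have : x * (h * x)⁻¹ = h⁻¹ := by group
  rw [this]
  exact H.inv_mem hh

private lemma construct {H : Subgroup G} {A C : Set G} (hAH : A ⊆ (H : Set G))
    (hC : IsRightSubfactorIn H A C) :
    ∃ B : Set G, IsRightSubfactor A B ∧
      Cardinal.mk ↥B = Cardinal.mk (G ⧸ H) * Cardinal.mk ↥C := by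
  classical
  obtain ⟨hCsub, hCdir, hCmax⟩ := hC
  set Q := Quotient (QuotientGroup.rightRel H) with hQdef
  set f : C × Q → G := fun p => (p.1 : G) * p.2.out with hf
  have hfq : ∀ (c : G) (_ : c ∈ (H : Set G)) (q : Q),
      Quotient.mk (QuotientGroup.rightRel H) (c * q.out) = q := by
    intro c hc q
    rw [mk_rightRel_mul H q.out hc, Quotient.out_eq]
  have hfinj : Function.Injective f := by
    rintro ⟨⟨c₁, hc₁⟩, q₁⟩ ⟨⟨c₂, hc₂⟩, q₂⟩ h
    simp only [hf] at h
    have hq : q₁ = q₂ := by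
      rw [← hfq c₁ (hCsub hc₁) q₁, ← hfq c₂ (hCsub hc₂) q₂, h]
    subst hq
    have : c₁ = c₂ := mul_right_cancel h
    simp [this]
  refine ⟨Set.range f, ⟨?_, ?_⟩, ?_⟩
  · -- directness
    rintro a₁ ha₁ b₁ ⟨⟨⟨c₁, hc₁⟩, q₁⟩, rfl⟩ a₂ ha₂ b₂ ⟨⟨⟨c₂, hc₂⟩, q₂⟩, rfl⟩ heq
    simp only [hf] at heq ⊢
    have heq' : (a₁ * c₁) * q₁.out = (a₂ * c₂) * q₂.out := by
      rw [mul_assoc, mul_assoc]; exact heq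
    have hq : q₁ = q₂ := by
      rw [← hfq (a₁ * c₁) (H.mul_mem (hAH ha₁) (hCsub hc₁)) q₁,
        ← hfq (a₂ * c₂) (H.mul_mem (hAH ha₂) (hCsub hc₂)) q₂, heq']
    subst hq
    have hac : a₁ * c₁ = a₂ * c₂ := mul_right_cancel heq'
    obtain ⟨haa, hcc⟩ := hCdir a₁ ha₁ c₁ hc₁ a₂ ha₂ c₂ hc₂ hac
    exact ⟨haa, by rw [hcc]⟩
  · -- maximality
    intro B' hBB' hB'dir
    refine Set.Subset.antisymm ?_ hBB'
    intro x hx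
    set q : Q := Quotient.mk (QuotientGroup.rightRel H) x with hqdef
    have hcH : x * q.out⁻¹ ∈ H := by
      have : Quotient.mk (QuotientGroup.rightRel H) q.out
          = Quotient.mk (QuotientGroup.rightRel H) x := by rw [Quotient.out_eq]
      have hmem : x * q.out⁻¹ ∈ H := (mk_rightRel_eq H q.out x).mp this
      exact hmem
    set c : G := x * q.out⁻¹ with hcdef
    have hC' : insert c C = C := by
      refine hCmax (insert c C) ?_ (Set.subset_insert _ _) ?_
      · intro y hy
        rcases hy with rfl | hy
        · exact hcH
        · exact hCsub hy
      · rintro a₁ ha₁ c₁ hc₁ a₂ ha₂ c₂ hc₂ heq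
        have key : ∀ (a : G), a ∈ A → ∀ c' ∈ C, a * c = _root_.id (a * c) := fun _ _ _ _ => rfl
        rcases hc₁ with rfl | hc₁ <;> rcases hc₂ with rfl | hc₂
        · exact ⟨mul_right_cancel heq, rfl⟩
        · -- a₁ * c = a₂ * c₂ with c₂ ∈ C
          have hx2 : a₁ * x = a₂ * (c₂ * q.out) := by
            have := congrArg (· * q.out) heq
            simp only [hcdef] at this
            calc a₁ * x = a₁ * (x * q.out⁻¹) * q.out := by group
              _ = a₂ * c₂ * q.out := this
              _ = a₂ * (c₂ * q.out) := by rw [mul_assoc]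
          have hbmem : c₂ * q.out ∈ Set.range f := ⟨⟨⟨c₂, hc₂⟩, q⟩, rfl⟩
          obtain ⟨haa, hxx⟩ := hB'dir a₁ ha₁ x hx a₂ ha₂ (c₂ * q.out) (hBB' hbmem) hx2
          refine ⟨haa, ?_⟩
          rw [hcdef, hxx]
          group
        · -- symmetric
          have hx2 : a₂ * x = a₁ * (c₁ * q.out) := by
            have := congrArg (· * q.out) heq.symm
            simp only [hcdef] at this
            calc a₂ * x = a₂ * (x * q.out⁻¹) * q.out := by group
              _ = a₁ * c₁ * q.out := this
              _ = a₁ * (c₁ * q.out) := by rw [mul_assoc]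
          have hbmem : c₁ * q.out ∈ Set.range f := ⟨⟨⟨c₁, hc₁⟩, q⟩, rfl⟩
          obtain ⟨haa, hxx⟩ := hB'dir a₂ ha₂ x hx a₁ ha₁ (c₁ * q.out) (hBB' hbmem) hx2
          refine ⟨haa.symm, ?_⟩
          rw [hcdef, hxx]
          group
        · exact hCdir a₁ ha₁ c₁ hc₁ a₂ ha₂ c₂ hc₂ heq
    have hcC : c ∈ C := by rw [← hC']; exact Set.mem_insert _ _
    refine ⟨⟨⟨c, hcC⟩, q⟩, ?_⟩
    simp only [hf, hcdef]
    group
  · -- cardinality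
    rw [Cardinal.mk_range_eq f hfinj]
    have h1 : Cardinal.mk (C × Q) = Cardinal.mk ↥C * Cardinal.mk Q := (Cardinal.mk_prod _ _).trans
      (by simp)
    rw [h1, mul_comm]
    congr 1
    exact Cardinal.mk_congr (QuotientGroup.quotientRightRelEquivQuotientLeftRel H)

private lemma decompose {H : Subgroup G} {A B : Set G} (hAH : A ⊆ (H : Set G))
    (hB : IsRightSubfactor A B) :
    ∃ Cf : Quotient (QuotientGroup.rightRel H) → Set G,
      (∀ q, IsRightSubfactorIn H A (Cf q)) ∧
      Cardinal.mk ↥B = Cardinal.sum fun q => Cardinal.mk ↥(Cf q) := by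
  classical
  obtain ⟨hBdir, hBmax⟩ := hB
  set Q := Quotient (QuotientGroup.rightRel H) with hQdef
  set Bf : Q → Set G := fun q => B ∩ {x | Quotient.mk (QuotientGroup.rightRel H) x = q}
    with hBf
  set Cf : Q → Set G := fun q => (fun x => x * q.out⁻¹) '' Bf q with hCf
  have hmemH : ∀ (q : Q) (x : G), Quotient.mk (QuotientGroup.rightRel H) x = q →
      x * q.out⁻¹ ∈ H := by
    intro q x hx
    have : Quotient.mk (QuotientGroup.rightRel H) q.out
        = Quotient.mk (QuotientGroup.rightRel H) x := by rw [Quotient.out_eq, hx]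
    exact (mk_rightRel_eq H q.out x).mp this
  refine ⟨Cf, fun q => ⟨?_, ?_, ?_⟩, ?_⟩
  · rintro y ⟨x, ⟨hxB, hxq⟩, rfl⟩
    exact hmemH q x hxq
  · rintro a₁ ha₁ y₁ ⟨x₁, ⟨hx₁B, _⟩, rfl⟩ a₂ ha₂ y₂ ⟨x₂, ⟨hx₂B, _⟩, rfl⟩ heq
    have : a₁ * x₁ = a₂ * x₂ := by
      have h2 : (a₁ * (x₁ * q.out⁻¹)) * q.out = (a₂ * (x₂ * q.out⁻¹)) * q.out := by
        rw [heq]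
      have h3 : (a₁ * (x₁ * q.out⁻¹)) * q.out = a₁ * x₁ := by group
      have h4 : (a₂ * (x₂ * q.out⁻¹)) * q.out = a₂ * x₂ := by group
      rw [h3, h4] at h2
      exact h2
    obtain ⟨haa, hxx⟩ := hBdir a₁ ha₁ x₁ hx₁B a₂ ha₂ x₂ hx₂B this
    exact ⟨haa, by rw [hxx]⟩
  · -- maximality
    intro C' hC'H hCC' hC'dir
    refine Set.Subset.antisymm ?_ hCC'
    intro y hy
    have hyH : y ∈ H := hC'H hy
    have hB' : insert (y * q.out) B = B := by
      refine hBmax (insert (y * q.out) B) (Set.subset_insert _ _) ?_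
      rintro a₁ ha₁ b₁ hb₁ a₂ ha₂ b₂ hb₂ heq
      rcases hb₁ with rfl | hb₁ <;> rcases hb₂ with rfl | hb₂
      · exact ⟨mul_right_cancel heq, rfl⟩
      · have hb2eq : b₂ = (a₂⁻¹ * (a₁ * y)) * q.out := by
          have h2 : a₂ * b₂ = a₂ * ((a₂⁻¹ * (a₁ * y)) * q.out) := by
            rw [← heq]; group
          exact mul_left_cancel h2
        have hb₂q : Quotient.mk (QuotientGroup.rightRel H) b₂ = q := by
          rw [hb2eq, mk_rightRel_mul H q.out
            (H.mul_mem (H.inv_mem (hAH ha₂)) (H.mul_mem (hAH ha₁) hyH)), Quotient.out_eq]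
        have hmemC' : b₂ * q.out⁻¹ ∈ C' := hCC' ⟨b₂, ⟨hb₂, hb₂q⟩, rfl⟩
        have heq2 : a₁ * y = a₂ * (b₂ * q.out⁻¹) := by
          have h2 : (a₁ * y) * q.out = (a₂ * (b₂ * q.out⁻¹)) * q.out := by
            calc (a₁ * y) * q.out = a₁ * (y * q.out) := by rw [mul_assoc]
              _ = a₂ * b₂ := heq
              _ = (a₂ * (b₂ * q.out⁻¹)) * q.out := by group
          exact mul_right_cancel h2
        obtain ⟨haa, hyy⟩ := hC'dir a₁ ha₁ y hy a₂ ha₂ _ hmemC' heq2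
        refine ⟨haa, ?_⟩
        rw [hyy]; group
      · have hb1eq : b₁ = (a₁⁻¹ * (a₂ * y)) * q.out := by
          have h2 : a₁ * b₁ = a₁ * ((a₁⁻¹ * (a₂ * y)) * q.out) := by
            rw [heq]; group
          exact mul_left_cancel h2
        have hb₁q : Quotient.mk (QuotientGroup.rightRel H) b₁ = q := by
          rw [hb1eq, mk_rightRel_mul H q.out
            (H.mul_mem (H.inv_mem (hAH ha₁)) (H.mul_mem (hAH ha₂) hyH)), Quotient.out_eq]
        have hmemC' : b₁ * q.out⁻¹ ∈ C' := hCC' ⟨b₁, ⟨hb₁, hb₁q⟩, rfl⟩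
        have heq2 : a₂ * y = a₁ * (b₁ * q.out⁻¹) := by
          have h2 : (a₂ * y) * q.out = (a₁ * (b₁ * q.out⁻¹)) * q.out := by
            calc (a₂ * y) * q.out = a₂ * (y * q.out) := by rw [mul_assoc]
              _ = a₁ * b₁ := heq.symm
              _ = (a₁ * (b₁ * q.out⁻¹)) * q.out := by group
          exact mul_right_cancel h2
        obtain ⟨haa, hyy⟩ := hC'dir a₂ ha₂ y hy a₁ ha₁ _ hmemC' heq2
        refine ⟨haa.symm, ?_⟩
        rw [hyy]; group
      · exact hBdir a₁ ha₁ b₁ hb₁ a₂ ha₂ b₂ hb₂ heq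
    have hmemB : y * q.out ∈ B := by
      rw [← hB']; exact Set.mem_insert _ _
    have hq : Quotient.mk (QuotientGroup.rightRel H) (y * q.out) = q := by
      rw [mk_rightRel_mul H q.out hyH, Quotient.out_eq]
    exact ⟨y * q.out, ⟨hmemB, hq⟩, by group⟩
  · -- cardinality
    have hBunion : B = ⋃ q, Bf q := by
      ext x
      constructor
      · intro hx
        exact Set.mem_iUnion.mpr ⟨Quotient.mk (QuotientGroup.rightRel H) x, hx, rfl⟩
      · intro hx
        obtain ⟨q, hq, -⟩ := Set.mem_iUnion.mp hx
        exact hq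
    have hdisj : Pairwise (Function.onFun Disjoint Bf) := by
      intro q₁ q₂ hne
      rw [Function.onFun, Set.disjoint_left]
      rintro x ⟨-, h1⟩ ⟨-, h2⟩
      exact hne (h1.symm.trans h2)
    have h1 : Cardinal.mk ↥B = Cardinal.sum fun q => Cardinal.mk ↥(Bf q) := by
      rw [show (Cardinal.mk ↥B) = Cardinal.mk ↥(⋃ q, Bf q) from by rw [← hBunion]]
      exact Cardinal.mk_iUnion_eq_sum_mk hdisj
    rw [h1]
    congr 1
    funext q
    exact (Cardinal.mk_image_eq (fun a b hab => mul_right_cancel hab)).symm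

private lemma key (H : Subgroup G) (A : Set G) (hAH : A ⊆ (H : Set G)) :
    rLowerIndex A = Cardinal.mk (G ⧸ H) * rLowerIndexIn H A ∧
    rUpperIndex A = Cardinal.mk (G ⧸ H) * rUpperIndexIn H A := by
  classical
  set κ := Cardinal.mk (G ⧸ H) with hκdef
  have hQκ : Cardinal.mk (Quotient (QuotientGroup.rightRel H)) = κ :=
    Cardinal.mk_congr (QuotientGroup.quotientRightRelEquivQuotientLeftRel H)
  have hκ1 : (1 : Cardinal) ≤ κ := by
    rw [hκdef, Cardinal.one_le_iff_ne_zero, Cardinal.mk_ne_zero_iff]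
    infer_instance
  have hSHne : {c | ∃ B : Set G, IsRightSubfactorIn H A B ∧ c = Cardinal.mk ↥B}.Nonempty := by
    obtain ⟨C, hC⟩ := exists_subfactorIn H A
    exact ⟨_, C, hC, rfl⟩
  have hSGne : {c | ∃ B : Set G, IsRightSubfactor A B ∧ c = Cardinal.mk ↥B}.Nonempty := by
    obtain ⟨C, hC⟩ := exists_subfactorIn H A
    obtain ⟨B, hB, hcard⟩ := construct hAH hC
    exact ⟨_, B, hB, rfl⟩
  have hSH1 : ∀ c ∈ {c | ∃ B : Set G, IsRightSubfactorIn H A B ∧ c = Cardinal.mk ↥B},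
      (1 : Cardinal) ≤ c := by
    rintro c ⟨C, hC, rfl⟩
    rw [Cardinal.one_le_iff_ne_zero, Cardinal.mk_ne_zero_iff]
    exact (subfactorIn_nonempty hC).to_subtype
  have hbddG : BddAbove {c | ∃ B : Set G, IsRightSubfactor A B ∧ c = Cardinal.mk ↥B} := by
    refine BddAbove.mono ?_ (Cardinal.bddAbove_range fun B : Set G => Cardinal.mk ↥B)
    rintro c ⟨B, -, rfl⟩; exact ⟨B, rfl⟩
  have hbddH : BddAbove {c | ∃ B : Set G, IsRightSubfactorIn H A B ∧ c = Cardinal.mk ↥B} := by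
    refine BddAbove.mono ?_ (Cardinal.bddAbove_range fun B : Set G => Cardinal.mk ↥B)
    rintro c ⟨B, -, rfl⟩; exact ⟨B, rfl⟩
  constructor
  · apply le_antisymm
    · obtain ⟨C, hC, hCeq⟩ := csInf_mem hSHne
      obtain ⟨B, hB, hcard⟩ := construct hAH hC
      have hmem : Cardinal.mk ↥B ∈
          {c | ∃ B : Set G, IsRightSubfactor A B ∧ c = Cardinal.mk ↥B} := ⟨B, hB, rfl⟩
      calc rLowerIndex A ≤ Cardinal.mk ↥B := csInf_le (OrderBot.bddBelow _) hmem
        _ = κ * Cardinal.mk ↥C := hcard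
        _ = κ * rLowerIndexIn H A := by rw [show rLowerIndexIn H A = Cardinal.mk ↥C from hCeq]
    · apply le_csInf hSGne
      rintro c ⟨B, hB, rfl⟩
      obtain ⟨Cf, hCf, hcard⟩ := decompose (H := H) hAH hB
      calc κ * rLowerIndexIn H A
          = Cardinal.sum (fun _ : Quotient (QuotientGroup.rightRel H) =>
              rLowerIndexIn H A) := by rw [Cardinal.sum_const', hQκ]
        _ ≤ Cardinal.sum fun q => Cardinal.mk ↥(Cf q) := Cardinal.sum_le_sum _ _ fun q =>
            csInf_le (OrderBot.bddBelow _) ⟨Cf q, hCf q, rfl⟩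
        _ = Cardinal.mk ↥B := hcard.symm
  · apply le_antisymm
    · apply csSup_le hSGne
      rintro c ⟨B, hB, rfl⟩
      obtain ⟨Cf, hCf, hcard⟩ := decompose (H := H) hAH hB
      calc Cardinal.mk ↥B = Cardinal.sum fun q => Cardinal.mk ↥(Cf q) := hcard
        _ ≤ Cardinal.sum (fun _ : Quotient (QuotientGroup.rightRel H) =>
              rUpperIndexIn H A) :=
            Cardinal.sum_le_sum _ _ fun q => le_csSup hbddH ⟨Cf q, hCf q, rfl⟩
        _ = κ * rUpperIndexIn H A := by rw [Cardinal.sum_const', hQκ]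
    · apply mul_csSup_le hκ1 hSHne hSH1
      rintro c ⟨C, hC, rfl⟩
      obtain ⟨B, hB, hcard⟩ := construct hAH hC
      rw [← hcard]
      exact le_csSup hbddG ⟨B, hB, rfl⟩

end Main

theorem stmt3 {G : Type*} [Group G] (H : Subgroup G) (A : Set G) (hAH : A ⊆ (H : Set G)) :
    rLowerIndex A = Cardinal.mk (G ⧸ H) * rLowerIndexIn H A ∧
    rUpperIndex A = Cardinal.mk (G ⧸ H) * rUpperIndexIn H A ∧
    (∀ A' : Set G,
      rLowerIndex A' =
        Cardinal.mk (G ⧸ Subgroup.closure A') * rLowerIndexIn (Subgroup.closure A') A' ∧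
      rUpperIndex A' =
        Cardinal.mk (G ⧸ Subgroup.closure A') * rUpperIndexIn (Subgroup.closure A') A') :=
  ⟨(key H A hAH).1, (key H A hAH).2,
    fun A' => key (Subgroup.closure A') A' Subgroup.subset_closure⟩
end

section
/- Let G be a group, H a subgroup of G, and A ⊆ H. Then the right subfactors of H relative to A are exactly the intersections with H of the right subfactors of G relative to A: SubF_r(H:A) = { 𝓑 ∩ H : 𝓑 ∈ SubF_r(G:A) }. -/
open Pointwise

lemma IsDirectProd.mono {G : Type*} [Group G] {A B B' : Set G}
    (h : IsDirectProd A B') (hB : B ⊆ B') : IsDirectProd A B :=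
  fun a₁ ha₁ b₁ hb₁ a₂ ha₂ b₂ hb₂ => h a₁ ha₁ b₁ (hB hb₁) a₂ ha₂ b₂ (hB hb₂)

lemma exists_subfactor_superset {G : Type*} [Group G] {A B : Set G}
    (hB : IsDirectProd A B) : ∃ 𝓑, B ⊆ 𝓑 ∧ IsRightSubfactor A 𝓑 := by
  have hc : ∀ c ⊆ {C : Set G | IsDirectProd A C}, IsChain (· ⊆ ·) c → c.Nonempty →
      ∃ ub ∈ {C : Set G | IsDirectProd A C}, ∀ s ∈ c, s ⊆ ub := by
    intro c hcS hchain hne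
    refine ⟨⋃₀ c, ?_, fun s hs => Set.subset_sUnion_of_mem hs⟩
    intro a₁ ha₁ b₁ hb₁ a₂ ha₂ b₂ hb₂ heq
    obtain ⟨s₁, hs₁, hb₁s⟩ := hb₁
    obtain ⟨s₂, hs₂, hb₂s⟩ := hb₂
    rcases hchain.total hs₁ hs₂ with h | h
    · exact hcS hs₂ a₁ ha₁ b₁ (h hb₁s) a₂ ha₂ b₂ hb₂s heq
    · exact hcS hs₁ a₁ ha₁ b₁ hb₁s a₂ ha₂ b₂ (h hb₂s) heq
  obtain ⟨m, hBm, hmS, hmax⟩ :=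
    zorn_subset_nonempty {C : Set G | IsDirectProd A C} hc B hB
  exact ⟨m, hBm, hmS, fun B' hsub hdir => subset_antisymm (hmax hdir hsub) hsub⟩

theorem stmt4 {G : Type*} [Group G] (H : Subgroup G) (A : Set G) (hAH : A ⊆ (H : Set G)) :
    {B : Set G | IsRightSubfactorIn H A B} =
      (fun 𝓑 : Set G => 𝓑 ∩ (H : Set G)) '' {𝓑 : Set G | IsRightSubfactor A 𝓑} := by
  ext B
  constructor
  · rintro ⟨hBH, hdir, hmax⟩
    obtain ⟨𝓑, hB𝓑, hsf⟩ := exists_subfactor_superset hdir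
    refine ⟨𝓑, hsf, ?_⟩
    exact hmax _ Set.inter_subset_right (fun x hx => ⟨hB𝓑 hx, hBH hx⟩)
      (hsf.1.mono Set.inter_subset_left)
  · rintro ⟨𝓑, ⟨hdir, hmax⟩, rfl⟩
    refine ⟨Set.inter_subset_right, hdir.mono Set.inter_subset_left, ?_⟩
    intro B' hB'H hsub hdir'
    refine subset_antisymm (fun b' hb' => ⟨?_, hB'H hb'⟩) hsub
    have key : IsDirectProd A (𝓑 ∪ {b'}) := by
      intro a₁ ha₁ b₁ hb₁ a₂ ha₂ b₂ hb₂ heq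
      have hb'H : b' ∈ H := hB'H hb'
      rcases hb₁ with hb₁ | hb₁ <;> rcases hb₂ with hb₂ | hb₂
      · exact hdir a₁ ha₁ b₁ hb₁ a₂ ha₂ b₂ hb₂ heq
      · rcases hb₂ with rfl
        have hb₁H : b₁ ∈ H := by
          have : b₁ = a₁⁻¹ * (a₂ * b₂) := by rw [← heq]; group
          rw [this]
          exact H.mul_mem (H.inv_mem (hAH ha₁)) (H.mul_mem (hAH ha₂) hb'H)
        exact hdir' a₁ ha₁ b₁ (hsub ⟨hb₁, hb₁H⟩) a₂ ha₂ b₂ hb' heq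
      · rcases hb₁ with rfl
        have hb₂H : b₂ ∈ H := by
          have : b₂ = a₂⁻¹ * (a₁ * b₁) := by rw [heq]; group
          rw [this]
          exact H.mul_mem (H.inv_mem (hAH ha₂)) (H.mul_mem (hAH ha₁) hb'H)
        exact hdir' a₁ ha₁ b₁ hb' a₂ ha₂ b₂ (hsub ⟨hb₂, hb₂H⟩) heq
      · rcases hb₁ with rfl; rcases hb₂ with rfl
        exact ⟨mul_right_cancel heq, rfl⟩
    have := hmax _ Set.subset_union_left key
    rw [← this]
    exact Or.inr rfl
end

section
/- Let G be an infinite group and F a subset of G such that 1 ∉ F, F = F⁻¹, and |F| < |G|. Then there exists a subset A of G such that A⁻¹A = G ∖ F. -/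
open Pointwise

namespace Stmt7Aux

variable {G : Type*} [Group G]

/-- elements that must be avoided when extending a partial solution `U` to realize `g`. -/
def Bad (F U : Set G) (g : G) : Set G := U * F ∪ U * F * {g⁻¹}

open Classical in
noncomputable def D (F : Set G) (e : (Cardinal.mk G).ord.ToType → G) :
    (Cardinal.mk G).ord.ToType → Set G := fun i =>
  if e i ∈ F then ∅
  else if h : (Bad F (⋃ j : {j // j < i}, D F e j.1) (e i))ᶜ.Nonempty
    then {h.some, h.some * e i} else ∅
termination_by i => i
decreasing_by all_goals exact j.2

noncomputable def UU (F : Set G) (e : (Cardinal.mk G).ord.ToType → G)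
    (i : (Cardinal.mk G).ord.ToType) : Set G := ⋃ j : {j // j < i}, D F e j.1

open Classical in
theorem D_eq (F : Set G) (e : (Cardinal.mk G).ord.ToType → G)
    (i : (Cardinal.mk G).ord.ToType) :
    D F e i = if e i ∈ F then ∅
      else if h : (Bad F (UU F e i) (e i))ᶜ.Nonempty
        then {h.some, h.some * e i} else ∅ := by
  rw [D]; rfl

theorem card_D (F : Set G) (e : (Cardinal.mk G).ord.ToType → G)
    (i : (Cardinal.mk G).ord.ToType) : Cardinal.mk (D F e i) ≤ 2 := by
  rw [D_eq]
  split_ifs with hF hN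
  · simp
  · calc Cardinal.mk ↥({hN.some, hN.some * e i} : Set G)
        ≤ Cardinal.mk ↥({hN.some * e i} : Set G) + 1 := Cardinal.mk_insert_le
      _ ≤ 2 := by rw [Cardinal.mk_singleton, one_add_one_eq_two]
  · simp

theorem card_UU [Infinite G] (F : Set G) (e : (Cardinal.mk G).ord.ToType → G)
    (i : (Cardinal.mk G).ord.ToType) : Cardinal.mk (UU F e i) < Cardinal.mk G := by
  have h1 : Cardinal.mk {j // j < i} < Cardinal.mk G := Cardinal.mk_Iio_ord_toType i
  have h2 : (2 : Cardinal) < Cardinal.mk G :=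
    lt_of_lt_of_le (by exact_mod_cast Cardinal.nat_lt_aleph0 2) (Cardinal.aleph0_le_mk G)
  calc Cardinal.mk (UU F e i)
      ≤ Cardinal.sum (fun j : {j // j < i} => Cardinal.mk (D F e j.1)) :=
        Cardinal.mk_iUnion_le_sum_mk
    _ ≤ Cardinal.sum (fun _ : {j // j < i} => 2) :=
        Cardinal.sum_le_sum _ _ fun j => card_D F e j.1
    _ = Cardinal.mk {j // j < i} * 2 := Cardinal.sum_const' _ _
    _ < Cardinal.mk G := Cardinal.mul_lt_of_lt (Cardinal.aleph0_le_mk G) h1 h2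

theorem bad_small [Infinite G] {F U : Set G} (hF : Cardinal.mk F < Cardinal.mk G)
    (hU : Cardinal.mk U < Cardinal.mk G) (g : G) : ((Bad F U g)ᶜ).Nonempty := by
  by_contra h
  rw [Set.not_nonempty_iff_eq_empty, Set.compl_empty_iff] at h
  have hp : Cardinal.mk (U * F : Set G) < Cardinal.mk G :=
    lt_of_le_of_lt Cardinal.mk_image2_le
      (Cardinal.mul_lt_of_lt (Cardinal.aleph0_le_mk G) hU hF)
  have hq : Cardinal.mk (U * F * {g⁻¹} : Set G) ≤ Cardinal.mk (U * F : Set G) := by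
    rw [Set.mul_singleton]
    exact Cardinal.mk_image_le
  have h2 : Cardinal.mk (Bad F U g) < Cardinal.mk G :=
    calc Cardinal.mk (Bad F U g) ≤ _ + _ := Cardinal.mk_union_le _ _
      _ < Cardinal.mk G :=
        Cardinal.add_lt_of_lt (Cardinal.aleph0_le_mk G) hp (lt_of_le_of_lt hq hp)
  rw [h] at h2
  simp [Cardinal.mk_univ] at h2

theorem D_struct (F : Set G) (e : (Cardinal.mk G).ord.ToType → G)
    (i : (Cardinal.mk G).ord.ToType) (hne : (D F e i).Nonempty) :
    ∃ x, x ∉ Bad F (UU F e i) (e i) ∧ e i ∉ F ∧ D F e i = {x, x * e i} := by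
  rw [D_eq] at hne ⊢
  split_ifs at hne ⊢ with hF hN
  · exact absurd hne (by simp)
  · exact ⟨hN.some, hN.some_mem, hF, rfl⟩
  · exact absurd hne (by simp)

theorem safe_lt {F : Set G} (hsym : F⁻¹ = F) (e : (Cardinal.mk G).ord.ToType → G)
    {i j : (Cardinal.mk G).ord.ToType} (hji : j < i) {a b : G}
    (ha : a ∈ D F e j) (hb : b ∈ D F e i) : a⁻¹ * b ∉ F := by
  have hne : (D F e i).Nonempty := ⟨b, hb⟩
  obtain ⟨x, hx, hgF, hD⟩ := D_struct F e i hne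
  have haU : a ∈ UU F e i := Set.mem_iUnion.2 ⟨⟨j, hji⟩, ha⟩
  intro hmem
  apply hx
  rw [hD] at hb
  rcases hb with rfl | rfl
  · left
    have := Set.mul_mem_mul haU hmem
    simpa using this
  · right
    have h1 : (a : G) * (a⁻¹ * (x * e i)) ∈ UU F e i * F := Set.mul_mem_mul haU hmem
    have h2 : (x * e i) * (e i)⁻¹ ∈ UU F e i * F * {(e i)⁻¹} := by
      apply Set.mul_mem_mul _ (Set.mem_singleton _)
      simpa using h1
    simpa using h2

theorem safe_eq {F : Set G} (h1 : (1 : G) ∉ F) (hsym : F⁻¹ = F)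
    (e : (Cardinal.mk G).ord.ToType → G) {i : (Cardinal.mk G).ord.ToType} {a b : G}
    (ha : a ∈ D F e i) (hb : b ∈ D F e i) : a⁻¹ * b ∉ F := by
  obtain ⟨x, -, hgF, hD⟩ := D_struct F e i ⟨a, ha⟩
  have hginv : (e i)⁻¹ ∉ F := by
    rw [← hsym]
    simpa using hgF
  rw [hD] at ha hb
  rcases ha with rfl | rfl <;> rcases hb with rfl | rfl <;>
    simp_all [mul_assoc]

end Stmt7Aux

theorem stmt7 {G : Type*} [Group G] [Infinite G] (F : Set G)
    (h1 : (1 : G) ∉ F) (hsym : F⁻¹ = F) (hcard : Cardinal.mk ↥F < Cardinal.mk G) :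
    ∃ A : Set G, A⁻¹ * A = Fᶜ := by
  classical
  open Stmt7Aux in
  obtain ⟨e⟩ : Nonempty ((Cardinal.mk G).ord.ToType ≃ G) :=
    Cardinal.eq.mp (Cardinal.mk_ord_toType (Cardinal.mk G))
  refine ⟨⋃ i, D F (⇑e) i, ?_⟩
  ext c
  constructor
  · rintro hc
    obtain ⟨p, hp, q, hq, rfl⟩ := Set.mem_mul.1 hc
    rw [Set.mem_inv] at hp
    obtain ⟨j, ha⟩ := Set.mem_iUnion.1 hp
    obtain ⟨i, hb⟩ := Set.mem_iUnion.1 hq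
    rcases lt_trichotomy j i with h | rfl | h
    · have := safe_lt hsym (⇑e) h ha hb
      simpa using this
    · have := safe_eq h1 hsym (⇑e) ha hb
      simpa using this
    · have hs := safe_lt hsym (⇑e) h hb ha
      intro hmem
      apply hs
      rw [← hsym]
      simpa using hmem
  · intro hg
    set i := e.symm c with hi
    have hei : e i = c := e.apply_symm_apply c
    have hne : (D F (⇑e) i).Nonempty := by
      rw [D_eq, if_neg (by rw [hei]; exact hg), dif_pos (bad_small hcard (card_UU F (⇑e) i) (e i))]
      exact ⟨_, Set.mem_insert _ _⟩
    obtain ⟨x, -, -, hD⟩ := D_struct F (⇑e) i hne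
    refine Set.mem_mul.2 ⟨x⁻¹, ?_, x * e i, ?_, by rw [hei]; group⟩
    · rw [Set.mem_inv, inv_inv]
      exact Set.mem_iUnion.2 ⟨i, by rw [hD]; exact Set.mem_insert _ _⟩
    · exact Set.mem_iUnion.2 ⟨i, by rw [hD]; exact Set.mem_insert_iff.2 (Or.inr rfl)⟩
end

section
/- Let G be an infinite group, A ⊆ G, and F a finite subset of G such that f⁻¹Af ⊆ A for every f ∈ F and all elements of F commute with each other. Then the following are equivalent: (A∪F)⁻¹(A∪F) is right syndetic in G; A⁻¹A is right syndetic in G; (A∖F)⁻¹(A∖F) is right syndetic in G. -/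
open Pointwise

/-- A subset `S` of a group `G` is right syndetic if finitely many right
translates of `S` cover `G`, i.e. `S * F' = G` for some finite `F'`. -/
def RightSyndetic {G : Type*} [Group G] (S : Set G) : Prop :=
  ∃ F' : Finset G, S * (F' : Set G) = Set.univ

private lemma rs_of_finite {G : Type*} [Group G] {S T : Set G} (hT : T.Finite)
    (h : Set.univ ⊆ S * T) : RightSyndetic S := by
  refine ⟨hT.toFinset, Set.eq_univ_of_univ_subset ?_⟩
  rwa [Set.Finite.coe_toFinset]

private lemma rs_mono {G : Type*} [Group G] {S T : Set G} (hST : S ⊆ T)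
    (hS : RightSyndetic S) : RightSyndetic T := by
  obtain ⟨K, hK⟩ := hS
  refine rs_of_finite K.finite_toSet ?_
  rw [← hK]
  exact Set.mul_subset_mul hST Set.Subset.rfl

private lemma main_lemma {G : Type*} [Group G] [Infinite G] (A : Set G) (F : Finset G)
    (hconj : ∀ f ∈ F, ∀ a ∈ A, f⁻¹ * a * f ∈ A)
    (h : RightSyndetic ((A ∪ (F : Set G))⁻¹ * (A ∪ (F : Set G)))) :
    RightSyndetic (A⁻¹ * A) := by
  obtain ⟨K, hK⟩ := h
  rcases A.eq_empty_or_nonempty with rfl | ⟨a₀, ha₀⟩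
  · exfalso
    have hfin : (((∅ : Set G) ∪ (F : Set G))⁻¹ * ((∅ : Set G) ∪ (F : Set G)) * (K : Set G)).Finite := by
      simp only [Set.empty_union]
      exact (F.finite_toSet.inv.mul F.finite_toSet).mul K.finite_toSet
    rw [hK] at hfin
    exact Set.infinite_univ hfin
  by_contra hns
  set B : Set G := A⁻¹ * A with hB
  have escape : ∀ M : Set G, M.Finite → ∃ x : G, ∀ m ∈ M, x * m ∉ B := by
    intro M hM
    by_contra hc
    push_neg at hc
    apply hns
    apply rs_of_finite hM.inv
    intro x _
    obtain ⟨m, hm, hxm⟩ := hc x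
    exact Set.mem_mul.mpr ⟨x * m, hxm, m⁻¹, Set.inv_mem_inv.mpr hm, by group⟩
  set Khat : Set G := (K : Set G) ∪ (({a₀⁻¹} : Set G) * (F : Set G) * (K : Set G) ∪
      ((F : Set G))⁻¹ * (F : Set G) * (K : Set G)) with hKhat
  have hKhatFin : Khat.Finite := by
    refine K.finite_toSet.union (Set.Finite.union ?_ ?_)
    · exact ((Set.finite_singleton _).mul F.finite_toSet).mul K.finite_toSet
    · exact (F.finite_toSet.inv.mul F.finite_toSet).mul K.finite_toSet
  set Q : Set G := ((K : Set G))⁻¹ * (F : Set G) with hQ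
  have hQfin : Q.Finite := K.finite_toSet.inv.mul F.finite_toSet
  have claim1 : ∀ g : G, g ∉ B * Khat → ∃ q ∈ Q, g * q ∈ A := by
    intro g hg
    have hgu : g ∈ (A ∪ (F : Set G))⁻¹ * (A ∪ (F : Set G)) * (K : Set G) := by
      rw [hK]; exact Set.mem_univ g
    obtain ⟨c, hc, k, hk, hck⟩ := Set.mem_mul.mp hgu
    obtain ⟨u', hu', v, hv, huv⟩ := Set.mem_mul.mp hc
    rw [Set.mem_inv] at hu'
    rcases hu' with huA | huF
    · rcases hv with hvA | hvF
      · refine absurd (Set.mem_mul.mpr ⟨c, ?_, k, Set.mem_union_left _ hk, hck⟩) hg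
        exact Set.mem_mul.mpr ⟨u', Set.mem_inv.mpr huA, v, hvA, huv⟩
      · refine absurd (Set.mem_mul.mpr ⟨u' * a₀, ?_, a₀⁻¹ * v * k, ?_, ?_⟩) hg
        · exact Set.mem_mul.mpr ⟨u', Set.mem_inv.mpr huA, a₀, ha₀, rfl⟩
        · refine Set.mem_union_right _ (Set.mem_union_left _ ?_)
          exact Set.mem_mul.mpr ⟨a₀⁻¹ * v, Set.mem_mul.mpr ⟨a₀⁻¹, rfl, v, hvF, rfl⟩, k, hk, by group⟩
        · rw [← hck, ← huv]; group
    · rcases hv with hvA | hvF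
      · refine ⟨k⁻¹ * u'⁻¹, ?_, ?_⟩
        · exact Set.mem_mul.mpr ⟨k⁻¹, Set.inv_mem_inv.mpr hk, u'⁻¹, huF, rfl⟩
        · have heq : g * (k⁻¹ * u'⁻¹) = (u'⁻¹)⁻¹ * v * u'⁻¹ := by rw [← hck, ← huv]; group
          rw [heq]
          exact hconj u'⁻¹ huF v hvA
      · refine absurd (Set.mem_mul.mpr ⟨a₀⁻¹ * a₀, ?_, u' * v * k, ?_, ?_⟩) hg
        · exact Set.mem_mul.mpr ⟨a₀⁻¹, Set.inv_mem_inv.mpr ha₀, a₀, ha₀, rfl⟩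
        · refine Set.mem_union_right _ (Set.mem_union_right _ ?_)
          exact Set.mem_mul.mpr ⟨u' * v, Set.mem_mul.mpr ⟨u', Set.mem_inv.mpr huF, v, hvF, rfl⟩, k, hk, rfl⟩
        · rw [← hck, ← huv]; group
  have final : ∀ γ : G, γ ∈ B * Q⁻¹ := by
    intro γ
    obtain ⟨x, hx⟩ := escape (Khat⁻¹ ∪ Q * ({γ} : Set G) * Khat⁻¹)
      (hKhatFin.inv.union ((hQfin.mul (Set.finite_singleton _)).mul hKhatFin.inv))
    have hx1 : x ∉ B * Khat := by
      intro hmem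
      obtain ⟨b, hb, kh, hkh, hbk⟩ := Set.mem_mul.mp hmem
      refine hx kh⁻¹ (Set.mem_union_left _ (Set.inv_mem_inv.mpr hkh)) ?_
      have : x * kh⁻¹ = b := by rw [← hbk]; group
      rw [this]; exact hb
    obtain ⟨κ, hκ, hxκ⟩ := claim1 x hx1
    have hy1 : x * κ * γ ∉ B * Khat := by
      intro hmem
      obtain ⟨b, hb, kh, hkh, hbk⟩ := Set.mem_mul.mp hmem
      refine hx (κ * γ * kh⁻¹) (Set.mem_union_right _ ?_) ?_
      · exact Set.mem_mul.mpr ⟨κ * γ, Set.mem_mul.mpr ⟨κ, hκ, γ, rfl, rfl⟩, kh⁻¹,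
          Set.inv_mem_inv.mpr hkh, rfl⟩
      · have : x * (κ * γ * kh⁻¹) = b := by
          rw [show x * (κ * γ * kh⁻¹) = x * κ * γ * kh⁻¹ by group, ← hbk]; group
        rw [this]; exact hb
    obtain ⟨q', hq', hyq⟩ := claim1 _ hy1
    refine Set.mem_mul.mpr ⟨γ * q', ?_, q'⁻¹, Set.inv_mem_inv.mpr hq', by group⟩
    exact Set.mem_mul.mpr ⟨(x * κ)⁻¹, Set.inv_mem_inv.mpr hxκ, x * κ * γ * q',
      by convert hyq using 2, by group⟩
  exact hns (rs_of_finite hQfin.inv fun γ _ => final γ)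

theorem stmt8 {G : Type*} [Group G] [Infinite G] (A : Set G) (F : Finset G)
    (hconj : ∀ f ∈ F, ∀ a ∈ A, f⁻¹ * a * f ∈ A)
    (hcomm : ∀ f ∈ F, ∀ g ∈ F, f * g = g * f) :
    (RightSyndetic ((A ∪ (F : Set G))⁻¹ * (A ∪ (F : Set G))) ↔ RightSyndetic (A⁻¹ * A)) ∧
    (RightSyndetic (A⁻¹ * A) ↔ RightSyndetic ((A \ (F : Set G))⁻¹ * (A \ (F : Set G)))) := by
  have hsubAF : A ⊆ A ∪ (F : Set G) := Set.subset_union_left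
  have hsubA'A : A \ (F : Set G) ⊆ A := Set.diff_subset
  have hconj' : ∀ f ∈ F, ∀ a ∈ A \ (F : Set G), f⁻¹ * a * f ∈ A \ (F : Set G) := by
    intro f hf a ha
    obtain ⟨haA, haF⟩ := ha
    refine ⟨hconj f hf a haA, fun hmem => haF ?_⟩
    have hcm : f * (f⁻¹ * a * f) = (f⁻¹ * a * f) * f := hcomm f hf _ hmem
    have h2 : f * (f⁻¹ * a * f) = a * f := by group
    rw [h2] at hcm
    have : a = f⁻¹ * a * f := mul_right_cancel hcm
    rw [this]; exact hmem
  have hAunion : A ⊆ (A \ (F : Set G)) ∪ (F : Set G) := by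
    intro a ha
    by_cases hmem : a ∈ (F : Set G)
    · exact Or.inr hmem
    · exact Or.inl ⟨ha, hmem⟩
  constructor
  · constructor
    · exact fun h => main_lemma A F hconj h
    · exact fun h => rs_mono (Set.mul_subset_mul (Set.inv_subset_inv.mpr hsubAF) hsubAF) h
  · constructor
    · intro h
      exact main_lemma (A \ (F : Set G)) F hconj'
        (rs_mono (Set.mul_subset_mul (Set.inv_subset_inv.mpr hAunion) hAunion) h)
    · exact fun h => rs_mono (Set.mul_subset_mul (Set.inv_subset_inv.mpr hsubA'A) hsubA'A) h
end

section
/- Let n ≥ 0 be an integer and A a subset of the additive group ℤ such that (ℤ ∖ (A−A)) ∪ {0} = {−n, −n+1, …, n−1, n}. Then the subfactors of ℤ relative to A that contain 0 are exactly the integer intervals [−x, y] ∩ ℤ with x, y ≥ 0 and x + y = n; moreover B − B = {−n, …, n} for every such subfactor B. Consequently A is index stable in ℤ with index |ℤ:A| = n + 1. -/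
open Pointwise

/-- The sum `A + B` is direct. -/
def IsDirectSum (A B : Set ℤ) : Prop :=
  ∀ a₁ ∈ A, ∀ b₁ ∈ B, ∀ a₂ ∈ A, ∀ b₂ ∈ B, a₁ + b₁ = a₂ + b₂ → a₁ = a₂ ∧ b₁ = b₂

/-- `B` is a subfactor of `(ℤ,+)` relative to `A`. -/
def IsSubfactor (A B : Set ℤ) : Prop :=
  IsDirectSum A B ∧ ∀ B' : Set ℤ, B ⊆ B' → IsDirectSum A B' → B' = B

theorem stmt13 (n : ℕ) (A : Set ℤ)
    (hA : (A - A)ᶜ ∪ {0} = Set.Icc (-(n : ℤ)) (n : ℤ)) :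
    ({B : Set ℤ | IsSubfactor A B ∧ (0 : ℤ) ∈ B} =
      {B : Set ℤ | ∃ x y : ℤ, 0 ≤ x ∧ 0 ≤ y ∧ x + y = (n : ℤ) ∧ B = Set.Icc (-x) y}) ∧
    (∀ B : Set ℤ, IsSubfactor A B → (0 : ℤ) ∈ B →
      B - B = Set.Icc (-(n : ℤ)) (n : ℤ)) ∧
    (∀ B : Set ℤ, IsSubfactor A B → Cardinal.mk ↥B = (n : Cardinal) + 1) := by
  -- A is nonempty
  have hAne : A.Nonempty := by
    by_contra h
    rw [Set.not_nonempty_iff_eq_empty] at h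
    have h1 : ((n : ℤ) + 1) ∈ Set.Icc (-(n : ℤ)) (n : ℤ) := by
      rw [← hA]; left
      simp [h]
    simp only [Set.mem_Icc] at h1
    omega
  -- small nonzero elements are not in A - A
  have h1 : ∀ d : ℤ, d ∈ A - A → -(n : ℤ) ≤ d → d ≤ (n : ℤ) → d = 0 := by
    intro d hd hd1 hd2
    have : d ∈ (A - A)ᶜ ∪ {0} := by rw [hA]; exact Set.mem_Icc.2 ⟨hd1, hd2⟩
    rcases this with h | h
    · exact absurd hd h
    · exact h
  -- large elements are in A - A
  have h2 : ∀ d : ℤ, ((n : ℤ) < d ∨ d < -(n : ℤ)) → d ∈ A - A := by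
    intro d hd
    by_contra h
    have : d ∈ (A - A)ᶜ ∪ {0} := Or.inl h
    rw [hA, Set.mem_Icc] at this
    omega
  -- direct sum characterization
  have hdir : ∀ B : Set ℤ, IsDirectSum A B ↔
      ∀ b₁ ∈ B, ∀ b₂ ∈ B, -(n : ℤ) ≤ b₁ - b₂ ∧ b₁ - b₂ ≤ (n : ℤ) := by
    intro B
    constructor
    · intro hD b₁ hb₁ b₂ hb₂
      by_contra hc
      push_neg at hc
      have hbig : (n : ℤ) < b₁ - b₂ ∨ b₁ - b₂ < -(n : ℤ) := by omega
      obtain ⟨a₁, ha₁, a₂, ha₂, hsub⟩ := Set.mem_sub.1 (h2 _ hbig)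
      have heq : a₁ + b₂ = a₂ + b₁ := by omega
      have := hD a₁ ha₁ b₂ hb₂ a₂ ha₂ b₁ hb₁ heq
      omega
    · intro h a₁ ha₁ b₁ hb₁ a₂ ha₂ b₂ hb₂ heq
      have hd : a₁ - a₂ ∈ A - A := Set.mem_sub.2 ⟨a₁, ha₁, a₂, ha₂, rfl⟩
      have hb := h b₂ hb₂ b₁ hb₁
      have h0 : a₁ - a₂ = 0 := h1 _ hd (by omega) (by omega)
      omega
  -- subfactor characterization
  have hsub : ∀ B : Set ℤ, IsSubfactor A B ↔ ∃ c : ℤ, B = Set.Icc c (c + n) := by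
    intro B
    constructor
    · rintro ⟨hD, hmax⟩
      -- B nonempty
      have hBne : B.Nonempty := by
        by_contra h
        rw [Set.not_nonempty_iff_eq_empty] at h
        have hD0 : IsDirectSum A {0} := by
          rw [hdir]
          intro b₁ hb₁ b₂ hb₂
          simp only [Set.mem_singleton_iff] at hb₁ hb₂
          subst hb₁; subst hb₂; constructor <;> omega
        have := hmax {0} (by rw [h]; exact Set.empty_subset _) hD0
        rw [h] at this
        exact absurd this (by simp)
      obtain ⟨b₀, hb₀⟩ := hBne
      rw [hdir] at hD
      -- B has a greatest element
      obtain ⟨M, hM, hMg⟩ := Int.exists_greatest_of_bdd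
        (P := (· ∈ B)) ⟨b₀ + n, fun z hz => by have := hD z hz b₀ hb₀; omega⟩ ⟨b₀, hb₀⟩
      refine ⟨M - n, ?_⟩
      have hBsub : B ⊆ Set.Icc (M - n) (M - n + n) := by
        intro z hz
        have hle := hMg z hz
        have := hD M hM z hz
        rw [Set.mem_Icc]; omega
      have hD' : IsDirectSum A (Set.Icc (M - n) (M - n + n)) := by
        rw [hdir]
        intro b₁ hb₁ b₂ hb₂
        rw [Set.mem_Icc] at hb₁ hb₂
        omega
      exact (hmax _ hBsub hD').symm
    · rintro ⟨c, rfl⟩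
      have hD : IsDirectSum A (Set.Icc c (c + n)) := by
        rw [hdir]
        intro b₁ hb₁ b₂ hb₂
        rw [Set.mem_Icc] at hb₁ hb₂
        omega
      refine ⟨hD, fun B' hBB' hD' => ?_⟩
      refine Set.Subset.antisymm (fun x hx => ?_) hBB'
      rw [hdir] at hD'
      have hc : c ∈ B' := hBB' (Set.mem_Icc.2 ⟨le_refl c, by omega⟩)
      have hcn : c + n ∈ B' := hBB' (Set.mem_Icc.2 ⟨by omega, le_refl _⟩)
      have e1 := hD' x hx c hc
      have e2 := hD' x hx (c + n) hcn
      rw [Set.mem_Icc]; omega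
  refine ⟨?_, ?_, ?_⟩
  · ext B
    simp only [Set.mem_setOf_eq]
    constructor
    · rintro ⟨hSF, h0⟩
      obtain ⟨c, rfl⟩ := (hsub B).1 hSF
      rw [Set.mem_Icc] at h0
      exact ⟨-c, c + n, by omega, by omega, by omega, by rw [neg_neg]⟩
    · rintro ⟨x, y, hx, hy, hxy, rfl⟩
      refine ⟨(hsub _).2 ⟨-x, by rw [show -x + (n : ℤ) = y by omega]⟩, ?_⟩
      rw [Set.mem_Icc]; omega
  · intro B hSF h0
    obtain ⟨c, rfl⟩ := (hsub B).1 hSF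
    ext d
    simp only [Set.mem_sub, Set.mem_Icc]
    constructor
    · rintro ⟨u, hu, v, hv, rfl⟩
      omega
    · rintro ⟨hd1, hd2⟩
      rcases le_or_gt 0 d with h | h
      · exact ⟨c + d, ⟨by omega, by omega⟩, c, ⟨le_refl c, by omega⟩, by omega⟩
      · exact ⟨c, ⟨le_refl c, by omega⟩, c - d, ⟨by omega, by omega⟩, by omega⟩
  · intro B hSF
    obtain ⟨c, rfl⟩ := (hsub B).1 hSF
    have : Cardinal.mk ↥(Set.Icc c (c + n)) = Fintype.card ↥(Set.Icc c (c + n)) :=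
      Cardinal.mk_fintype _
    rw [this]
    have hcard : Fintype.card ↥(Set.Icc c (c + n)) = n + 1 := by
      rw [← Set.toFinset_card, Set.toFinset_Icc, Int.card_Icc]
      omega
    rw [hcard]
    push_cast
    ring
end

section
/- Let (a_n)_{n≥1} be a strictly increasing sequence of integers such that a_n − 2a_{n−1} → ∞ as n → ∞, and let A = {a_n : n ≥ 1}. Then the difference set A − A has unbounded gaps (for every L there is an interval of L consecutive integers disjoint from A − A), A − A is not syndetic in ℤ, and A is index stable in ℤ with index ℵ₀; in particular, every subfactor of ℤ relative to A is countably infinite. -/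
open Pointwise

/-- A subset `S` of `(ℤ,+)` is syndetic if `S + F = ℤ` for some finite `F`. -/
def Syndetic (S : Set ℤ) : Prop :=
  ∃ F : Finset ℤ, S + (F : Set ℤ) = Set.univ

lemma gap_lemma (a : ℕ → ℤ) (hmono : StrictMono a)
    (hlim : Filter.Tendsto (fun n => a (n + 1) - 2 * a n) Filter.atTop Filter.atTop)
    (L : ℕ) : ∃ x : ℤ, ∀ y ∈ Set.Ico x (x + (L : ℤ)), y ∉ Set.range a - Set.range a := by
  obtain ⟨K, hK⟩ := (Filter.tendsto_atTop.mp hlim ((L : ℤ) + 1 - a 0)).exists_forall_of_atTop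
  refine ⟨a K - a 0 + 1, ?_⟩
  rintro y ⟨hy1, hy2⟩ hyD
  rw [Set.mem_sub] at hyD
  obtain ⟨u, ⟨p, rfl⟩, v, ⟨q, rfl⟩, rfl⟩ := hyD
  by_cases hp : p ≤ K
  · have h1 : a p ≤ a K := hmono.monotone hp
    have h2 : a 0 ≤ a q := hmono.monotone (Nat.zero_le q)
    omega
  · push_neg at hp
    obtain ⟨r, hr, rfl⟩ : ∃ r, K ≤ r ∧ p = r + 1 :=
      ⟨p - 1, by omega, by omega⟩
    by_cases hq : q ≤ r
    · have h1 : a q ≤ a r := hmono.monotone hq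
      have h2 : a K ≤ a r := hmono.monotone hr
      have h3 := hK r hr
      omega
    · have h1 : a (r + 1) ≤ a q := hmono.monotone (by omega)
      have h2 : a 0 ≤ a K := hmono.monotone (Nat.zero_le K)
      omega

theorem stmt15 (a : ℕ → ℤ) (hmono : StrictMono a)
    (hlim : Filter.Tendsto (fun n => a (n + 1) - 2 * a n) Filter.atTop Filter.atTop) :
    (∀ L : ℕ, ∃ x : ℤ,
      ∀ y ∈ Set.Ico x (x + (L : ℤ)), y ∉ Set.range a - Set.range a) ∧
    ¬ Syndetic (Set.range a - Set.range a) ∧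
    (∀ B : Set ℤ, IsSubfactor (Set.range a) B → Cardinal.mk ↥B = Cardinal.aleph0) := by
  have hgap := gap_lemma a hmono hlim
  have hzero : (0 : ℤ) ∈ Set.range a - Set.range a :=
    ⟨a 0, ⟨0, rfl⟩, a 0, ⟨0, rfl⟩, by ring⟩
  have hsymm : ∀ y : ℤ, y ∈ Set.range a - Set.range a →
      -y ∈ Set.range a - Set.range a := by
    rintro y ⟨u, hu, v, hv, rfl⟩
    exact ⟨v, hv, u, hu, by ring⟩
  refine ⟨hgap, ?_, ?_⟩
  · rintro ⟨F, hF⟩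
    rcases F.eq_empty_or_nonempty with rfl | hne
    · simp only [Finset.coe_empty, Set.add_empty] at hF
      exact (Set.empty_ne_univ hF)
    · set m := F.min' hne
      set M := F.max' hne
      have hmM : m ≤ M := F.min'_le _ (F.max'_mem hne)
      set L : ℕ := (M - m).toNat + 1 with hL
      obtain ⟨x, hx⟩ := hgap L
      have hz : x + M ∈ (Set.range a - Set.range a) + (F : Set ℤ) := hF ▸ Set.mem_univ _
      obtain ⟨d, hd, f, hf, hdf⟩ := hz
      have hdf' : d + f = x + M := hdf
      have hfm : m ≤ f := F.min'_le f hf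
      have hfM : f ≤ M := F.le_max' f hf
      have hLcast : (L : ℤ) = M - m + 1 := by
        rw [hL]; push_cast [Int.toNat_of_nonneg (by omega : (0:ℤ) ≤ M - m)]; ring
      exact hx d ⟨by omega, by omega⟩ hd
  · intro B hB
    by_cases hfin : B.Finite
    · exfalso
      rcases Set.eq_empty_or_nonempty B with rfl | hne
      · have h01 : IsDirectSum (Set.range a) {0} := by
          rintro a₁ _ b₁ hb₁ a₂ _ b₂ hb₂ h
          simp only [Set.mem_singleton_iff] at hb₁ hb₂
          subst hb₁; subst hb₂
          exact ⟨by omega, rfl⟩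
        have := hB.2 {0} (Set.empty_subset _) h01
        exact absurd this (by simp [Set.eq_empty_iff_forall_notMem])
      · have hneF : hfin.toFinset.Nonempty := by
          simpa [Set.Finite.toFinset_nonempty] using hne
        set m := hfin.toFinset.min' hneF
        set M := hfin.toFinset.max' hneF
        have hmM : m ≤ M := hfin.toFinset.min'_le _ (hfin.toFinset.max'_mem hneF)
        set L : ℕ := (M - m).toNat + 1 with hL
        obtain ⟨x, hx⟩ := hgap L
        have hLcast : (L : ℤ) = M - m + 1 := by
          rw [hL]; push_cast [Int.toNat_of_nonneg (by omega : (0:ℤ) ≤ M - m)]; ring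
        set t : ℤ := x + M with ht
        have hkey : ∀ b ∈ B, t - b ∉ Set.range a - Set.range a := by
          intro b hb
          have h1 : m ≤ b := hfin.toFinset.min'_le b (hfin.mem_toFinset.mpr hb)
          have h2 : b ≤ M := hfin.toFinset.le_max' b (hfin.mem_toFinset.mpr hb)
          exact hx (t - b) ⟨by omega, by omega⟩
        have htB : t ∉ B := fun h => hkey t h (by simp only [sub_self]; exact hzero)
        have hdir : IsDirectSum (Set.range a) (B ∪ {t}) := by
          rintro a₁ ha₁ b₁ hb₁ a₂ ha₂ b₂ hb₂ h
          rcases hb₁ with hb₁ | hb₁ <;> rcases hb₂ with hb₂ | hb₂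
          · exact hB.1 a₁ ha₁ b₁ hb₁ a₂ ha₂ b₂ hb₂ h
          · simp only [Set.mem_singleton_iff] at hb₂; subst hb₂
            exfalso
            have : t - b₁ ∈ Set.range a - Set.range a := by
              have := Set.sub_mem_sub ha₁ ha₂
              have heq : a₁ - a₂ = t - b₁ := by omega
              rwa [heq] at this
            exact hkey b₁ hb₁ this
          · simp only [Set.mem_singleton_iff] at hb₁; subst hb₁
            exfalso
            have : t - b₂ ∈ Set.range a - Set.range a := by
              have := Set.sub_mem_sub ha₂ ha₁
              have heq : a₂ - a₁ = t - b₂ := by omega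
              rwa [heq] at this
            exact hkey b₂ hb₂ this
          · simp only [Set.mem_singleton_iff] at hb₁ hb₂; subst hb₁; subst hb₂
            exact ⟨by omega, rfl⟩
        have := hB.2 (B ∪ {t}) Set.subset_union_left hdir
        exact htB (this ▸ Set.mem_union_right B rfl)
    · have : Infinite ↥B := Set.infinite_coe_iff.mpr hfin
      exact Cardinal.mk_eq_aleph0 ↥B
end

section
/- Let ℙ denote the set of prime numbers viewed inside the additive group ℤ, and ℙ_o = ℙ ∖ {2} the set of odd primes. The following assertions are equivalent: (a) every even integer is the difference of two primes (i.e., 2ℤ ⊆ ℙ − ℙ); (b) ℙ is index stable in ℤ with index |ℤ:ℙ| = 2; (c) ℙ_o is index stable in ℤ with index |ℤ:ℙ_o| = 2; (d) for all distinct nonzero integers a, b, at least one of a, b, a − b belongs to ℙ − ℙ; (e) whenever a, b are integers neither of which belongs to ℙ − ℙ, then a + b ∈ ℙ − ℙ; (f) |ℤ:ℙ|⁺ = 2; (g) |ℤ:ℙ_o|⁺ = 2. -/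
open Pointwise

/-- The upper subindex `|ℤ:A|⁺`. -/
noncomputable def upperIndex (A : Set ℤ) : Cardinal :=
  sSup {c | ∃ B : Set ℤ, IsSubfactor A B ∧ c = Cardinal.mk ↥B}

/-- The set of prime numbers inside `ℤ`. -/
def Primes : Set ℤ := {x : ℤ | ∃ p : ℕ, p.Prime ∧ x = (p : ℤ)}

/-- The set of odd primes inside `ℤ`. -/
def OddPrimes : Set ℤ := Primes \ {2}

/-! ### Auxiliary lemmas -/

lemma mem_PP_iff {x : ℤ} :
    x ∈ Primes - Primes ↔ ∃ p q : ℕ, p.Prime ∧ q.Prime ∧ x = (p : ℤ) - q := by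
  rw [Set.mem_sub]
  constructor
  · rintro ⟨u, ⟨p, hp, rfl⟩, v, ⟨q, hq, rfl⟩, rfl⟩
    exact ⟨p, q, hp, hq, rfl⟩
  · rintro ⟨p, q, hp, hq, rfl⟩
    exact ⟨(p : ℤ), ⟨p, hp, rfl⟩, (q : ℤ), ⟨q, hq, rfl⟩, rfl⟩

lemma mem_OPP_iff {x : ℤ} :
    x ∈ OddPrimes - OddPrimes ↔
      ∃ p q : ℕ, p.Prime ∧ q.Prime ∧ p ≠ 2 ∧ q ≠ 2 ∧ x = (p : ℤ) - q := by
  rw [Set.mem_sub]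
  constructor
  · rintro ⟨u, ⟨⟨p, hp, rfl⟩, hu2⟩, v, ⟨⟨q, hq, rfl⟩, hv2⟩, rfl⟩
    refine ⟨p, q, hp, hq, ?_, ?_, rfl⟩
    · intro h; apply hu2; simp [h]
    · intro h; apply hv2; simp [h]
  · rintro ⟨p, q, hp, hq, hp2, hq2, rfl⟩
    refine ⟨(p : ℤ), ⟨⟨p, hp, rfl⟩, ?_⟩, (q : ℤ), ⟨⟨q, hq, rfl⟩, ?_⟩, rfl⟩
    · simp only [Set.mem_singleton_iff]
      exact_mod_cast hp2
    · simp only [Set.mem_singleton_iff]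
      exact_mod_cast hq2

lemma PP_neg {x : ℤ} (h : x ∈ Primes - Primes) : -x ∈ Primes - Primes := by
  rw [mem_PP_iff] at h ⊢
  obtain ⟨p, q, hp, hq, rfl⟩ := h
  exact ⟨q, p, hq, hp, by ring⟩

lemma zero_PP : (0 : ℤ) ∈ Primes - Primes :=
  mem_PP_iff.mpr ⟨3, 3, by norm_num, by norm_num, by norm_num⟩

lemma OPP_subset_PP {x : ℤ} (h : x ∈ OddPrimes - OddPrimes) : x ∈ Primes - Primes := by
  rw [mem_OPP_iff] at h
  obtain ⟨p, q, hp, hq, _, _, rfl⟩ := h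
  exact mem_PP_iff.mpr ⟨p, q, hp, hq, rfl⟩

lemma OPP_even {x : ℤ} (h : x ∈ OddPrimes - OddPrimes) : Even x := by
  rw [mem_OPP_iff] at h
  obtain ⟨p, q, hp, hq, hp2, hq2, rfl⟩ := h
  have hop : Odd p := hp.odd_of_ne_two hp2
  have hoq : Odd q := hq.odd_of_ne_two hq2
  have h1 : Odd ((p : ℤ)) := by exact_mod_cast hop
  have h2 : Odd ((q : ℤ)) := by exact_mod_cast hoq
  exact h1.sub_odd h2

lemma odd_not_OPP {x : ℤ} (hx : Odd x) : x ∉ OddPrimes - OddPrimes := by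
  intro h
  exact (Int.not_odd_iff_even.mpr (OPP_even h)) hx

lemma even_ne_zero_PP_OPP {x : ℤ} (hx : Even x) (hx0 : x ≠ 0)
    (h : x ∈ Primes - Primes) : x ∈ OddPrimes - OddPrimes := by
  rw [mem_PP_iff] at h
  obtain ⟨p, q, hp, hq, rfl⟩ := h
  have hpq : Even p ↔ Even q := by
    have h1 := Int.even_sub.mp hx
    constructor
    · intro h; exact_mod_cast h1.mp (by exact_mod_cast h)
    · intro h; exact_mod_cast h1.mpr (by exact_mod_cast h)
  refine mem_OPP_iff.mpr ⟨p, q, hp, hq, ?_, ?_, rfl⟩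
  · rintro rfl
    have hq2 : q = 2 := hq.even_iff.mp (hpq.mp (by norm_num))
    apply hx0
    rw [hq2]; norm_num
  · rintro rfl
    have hp2 : p = 2 := hp.even_iff.mp (hpq.mpr (by norm_num))
    apply hx0
    rw [hp2]; norm_num

lemma odd_not_PP {x : ℤ} (hx : Odd x)
    (h1 : ∀ p : ℕ, p.Prime → x ≠ (p : ℤ) - 2)
    (h2 : ∀ q : ℕ, q.Prime → x ≠ 2 - (q : ℤ)) : x ∉ Primes - Primes := by
  rw [mem_PP_iff]
  rintro ⟨p, q, hp, hq, rfl⟩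
  by_cases hq2 : q = 2
  · exact h1 p hp (by rw [hq2]; norm_num)
  by_cases hp2 : p = 2
  · exact h2 q hq (by rw [hp2]; push_cast; ring)
  · have hop : Odd p := hp.odd_of_ne_two hp2
    have hoq : Odd q := hq.odd_of_ne_two hq2
    have h1 : Odd ((p : ℤ)) := by exact_mod_cast hop
    have h2 : Odd ((q : ℤ)) := by exact_mod_cast hoq
    exact (Int.not_odd_iff_even.mpr (h1.sub_odd h2)) hx

lemma seven_not_PP : (7 : ℤ) ∉ Primes - Primes := by
  apply odd_not_PP ⟨3, by ring⟩
  · intro p hp he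
    have h9 : (p : ℤ) = 9 := by linarith
    have h9' : p = 9 := by exact_mod_cast h9
    rw [h9'] at hp
    norm_num at hp
  · intro q hq he
    have := Int.natCast_nonneg q
    have : (q : ℤ) = -5 := by linarith
    linarith [Int.natCast_nonneg q]

lemma neg_seven_not_PP : (-7 : ℤ) ∉ Primes - Primes := by
  intro h
  exact seven_not_PP (by simpa using PP_neg h)

/-- Key lemma: every even integer is a sum of two odd integers neither of which
is a difference of two primes. -/
lemma keyL {n : ℤ} (hn : Even n) :
    ∃ a b : ℤ, Odd a ∧ Odd b ∧ a ∉ Primes - Primes ∧ b ∉ Primes - Primes ∧ a + b = n := by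
  obtain ⟨m, hm⟩ := hn
  set c : ℤ := 15 + 5 * n + 30 * (|n| + 1) with hc
  have h45 : 45 ≤ c := by
    rw [hc]; linarith [abs_nonneg n, neg_abs_le n]
  have h45n : 45 ≤ c + n := by
    rw [hc]; linarith [abs_nonneg n, neg_abs_le n]
  have h3 : (3 : ℤ) ∣ (c + n) := ⟨5 + 2 * n + 10 * (|n| + 1), by rw [hc]; ring⟩
  have h5 : (5 : ℤ) ∣ c := ⟨3 + n + 6 * (|n| + 1), by rw [hc]; ring⟩
  have hcodd : Odd c := ⟨7 + 5 * m + 15 * (|n| + 1), by rw [hc, hm]; ring⟩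
  refine ⟨c + n - 2, 2 - c, ?_, ?_, ?_, ?_, by ring⟩
  · obtain ⟨k, hk⟩ := hcodd
    exact ⟨k + m - 1, by rw [hk, hm]; ring⟩
  · obtain ⟨k, hk⟩ := hcodd
    exact ⟨-k, by rw [hk]; ring⟩
  · apply odd_not_PP
    · obtain ⟨k, hk⟩ := hcodd
      exact ⟨k + m - 1, by rw [hk, hm]; ring⟩
    · intro p hp he
      have hpz : (p : ℤ) = c + n := by linarith
      have h3p : (3 : ℕ) ∣ p := by
        have : (3 : ℤ) ∣ (p : ℤ) := by rw [hpz]; exact h3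
        exact_mod_cast this
      rcases hp.eq_one_or_self_of_dvd 3 h3p with h | h
      · norm_num at h
      · rw [← h] at hpz
        norm_num at hpz
        linarith
    · intro q hq he
      have : (q : ℤ) = 4 - c - n := by linarith
      linarith [Int.natCast_nonneg q]
  · apply odd_not_PP
    · obtain ⟨k, hk⟩ := hcodd
      exact ⟨-k, by rw [hk]; ring⟩
    · intro p hp he
      have : (p : ℤ) = 4 - c := by linarith
      linarith [Int.natCast_nonneg p]
    · intro q hq he
      have hqz : (q : ℤ) = c := by linarith
      have h5q : (5 : ℕ) ∣ q := by
        have : (5 : ℤ) ∣ (q : ℤ) := by rw [hqz]; exact h5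
        exact_mod_cast this
      rcases hq.eq_one_or_self_of_dvd 5 h5q with h | h
      · norm_num at h
      · rw [← h] at hqz
        norm_num at hqz
        linarith

/-! ### Direct sums and subfactors -/

lemma isDirectSum_iff {A B : Set ℤ} :
    IsDirectSum A B ↔ ∀ b₁ ∈ B, ∀ b₂ ∈ B, b₁ - b₂ ∈ A - A → b₁ = b₂ := by
  constructor
  · intro h b₁ hb₁ b₂ hb₂ hd
    rw [Set.mem_sub] at hd
    obtain ⟨a₁, ha₁, a₂, ha₂, hs⟩ := hd
    exact ((h a₁ ha₁ b₂ hb₂ a₂ ha₂ b₁ hb₁ (by linarith)).2).symm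
  · intro h a₁ ha₁ b₁ hb₁ a₂ ha₂ b₂ hb₂ hs
    have hb : b₂ = b₁ := h b₂ hb₂ b₁ hb₁ (by
      rw [Set.mem_sub]; exact ⟨a₁, ha₁, a₂, ha₂, by linarith⟩)
    exact ⟨by linarith, hb.symm⟩

lemma isDirectSum_singleton (A : Set ℤ) (t : ℤ) : IsDirectSum A {t} := by
  rw [isDirectSum_iff]
  intro b₁ hb₁ b₂ hb₂ _
  simp only [Set.mem_singleton_iff] at hb₁ hb₂
  rw [hb₁, hb₂]

lemma exists_subfactor_s16 {A B₀ : Set ℤ} (h : IsDirectSum A B₀) :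
    ∃ B : Set ℤ, B₀ ⊆ B ∧ IsSubfactor A B := by
  have hch : ∀ c ⊆ {B | IsDirectSum A B}, IsChain (fun x1 x2 => x1 ⊆ x2) c → c.Nonempty →
      ∃ ub ∈ {B | IsDirectSum A B}, ∀ s ∈ c, s ⊆ ub := by
    intro c hcS hchain _
    refine ⟨⋃₀ c, ?_, fun s hs => Set.subset_sUnion_of_mem hs⟩
    intro a₁ ha₁ b₁ hb₁ a₂ ha₂ b₂ hb₂ hsum
    obtain ⟨s₁, hs₁, hb₁'⟩ := hb₁
    obtain ⟨s₂, hs₂, hb₂'⟩ := hb₂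
    rcases hchain.total hs₁ hs₂ with hss | hss
    · exact hcS hs₂ a₁ ha₁ b₁ (hss hb₁') a₂ ha₂ b₂ hb₂' hsum
    · exact hcS hs₁ a₁ ha₁ b₁ hb₁' a₂ ha₂ b₂ (hss hb₂') hsum
  obtain ⟨B, hsub, hmax⟩ := zorn_subset_nonempty {B | IsDirectSum A B} hch B₀ h
  refine ⟨B, hsub, hmax.prop, ?_⟩
  intro B' hBB' hB'
  exact Set.Subset.antisymm (hmax.2 hB' hBB') hBB'

lemma mk_pair {x y : ℤ} (h : x ≠ y) : Cardinal.mk ↥({x, y} : Set ℤ) = 2 := by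
  rw [Cardinal.mk_insert (by simpa using h), Cardinal.mk_singleton]
  exact one_add_one_eq_two

lemma mk_triple {x y z : ℤ} (hxy : x ≠ y) (hxz : x ≠ z) (hyz : y ≠ z) :
    Cardinal.mk ↥({x, y, z} : Set ℤ) = 3 := by
  rw [Cardinal.mk_insert (by simp [hxy, hxz]), mk_pair hyz]
  exact two_add_one_eq_three

/-! ### Main direction lemmas -/

lemma gd_card_primes (hgd : ∀ n : ℤ, Even n → n ∈ Primes - Primes)
    {B : Set ℤ} (hB : IsSubfactor Primes B) : Cardinal.mk ↥B = 2 := by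
  obtain ⟨hdir, hmax⟩ := hB
  rw [isDirectSum_iff] at hdir
  have hodd : ∀ u ∈ B, ∀ v ∈ B, u ≠ v → Odd (u - v) := by
    intro u hu v hv huv
    rcases Int.even_or_odd (u - v) with he | ho
    · exact absurd (hdir u hu v hv (hgd _ he)) huv
    · exact ho
  have hx : ∃ x, x ∈ B := by
    by_contra hemp
    push_neg at hemp
    have h0 := hmax {0} (fun t ht => absurd ht (hemp t)) (isDirectSum_singleton Primes 0)
    exact hemp 0 (h0 ▸ Set.mem_singleton 0)
  obtain ⟨x, hxB⟩ := hx
  have hy : ∃ y ∈ B, y ≠ x := by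
    by_contra hsing
    push_neg at hsing
    have hsub : B ⊆ {x, x + 7} := fun t ht => by simp [hsing t ht]
    have hdir7 : IsDirectSum Primes {x, x + 7} := by
      rw [isDirectSum_iff]
      intro b₁ hb₁ b₂ hb₂ hmem
      simp only [Set.mem_insert_iff, Set.mem_singleton_iff] at hb₁ hb₂
      rcases hb₁ with rfl | rfl <;> rcases hb₂ with rfl | rfl
      · rfl
      · rw [show b₁ - (b₁ + 7) = -7 by ring] at hmem
        exact absurd hmem neg_seven_not_PP
      · rw [show b₂ + 7 - b₂ = 7 by ring] at hmem
        exact absurd hmem seven_not_PP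
      · rfl
    have heq := hmax _ hsub hdir7
    have hx7 : x + 7 ∈ B := heq ▸ (by simp)
    have := hsing _ hx7
    linarith
  obtain ⟨y, hyB, hyx⟩ := hy
  have hBeq : B = {x, y} := by
    apply Set.Subset.antisymm
    · intro z hz
      simp only [Set.mem_insert_iff, Set.mem_singleton_iff]
      by_contra hzz
      push_neg at hzz
      obtain ⟨hzx, hzy⟩ := hzz
      obtain ⟨k, hk⟩ := hodd z hz x hxB hzx
      obtain ⟨l, hl⟩ := hodd z hz y hyB hzy
      obtain ⟨m, hm⟩ := hodd y hyB x hxB hyx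
      omega
    · intro z hz
      simp only [Set.mem_insert_iff, Set.mem_singleton_iff] at hz
      rcases hz with rfl | rfl
      · exact hxB
      · exact hyB
  rw [hBeq]
  exact mk_pair (Ne.symm hyx)

lemma gd_card_oddprimes (hgd : ∀ n : ℤ, Even n → n ∈ Primes - Primes)
    {B : Set ℤ} (hB : IsSubfactor OddPrimes B) : Cardinal.mk ↥B = 2 := by
  obtain ⟨hdir, hmax⟩ := hB
  rw [isDirectSum_iff] at hdir
  have hodd : ∀ u ∈ B, ∀ v ∈ B, u ≠ v → Odd (u - v) := by
    intro u hu v hv huv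
    rcases Int.even_or_odd (u - v) with he | ho
    · have : u - v ∈ OddPrimes - OddPrimes :=
        even_ne_zero_PP_OPP he (sub_ne_zero.mpr huv) (hgd _ he)
      exact absurd (hdir u hu v hv this) huv
    · exact ho
  have hx : ∃ x, x ∈ B := by
    by_contra hemp
    push_neg at hemp
    have h0 := hmax {0} (fun t ht => absurd ht (hemp t)) (isDirectSum_singleton OddPrimes 0)
    exact hemp 0 (h0 ▸ Set.mem_singleton 0)
  obtain ⟨x, hxB⟩ := hx
  have hy : ∃ y ∈ B, y ≠ x := by
    by_contra hsing
    push_neg at hsing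
    have hsub : B ⊆ {x, x + 1} := fun t ht => by simp [hsing t ht]
    have hdir1 : IsDirectSum OddPrimes {x, x + 1} := by
      rw [isDirectSum_iff]
      intro b₁ hb₁ b₂ hb₂ hmem
      simp only [Set.mem_insert_iff, Set.mem_singleton_iff] at hb₁ hb₂
      rcases hb₁ with rfl | rfl <;> rcases hb₂ with rfl | rfl
      · rfl
      · rw [show b₁ - (b₁ + 1) = -1 by ring] at hmem
        exact absurd hmem (odd_not_OPP ⟨-1, by ring⟩)
      · rw [show b₂ + 1 - b₂ = 1 by ring] at hmem
        exact absurd hmem (odd_not_OPP ⟨0, by ring⟩)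
      · rfl
    have heq := hmax _ hsub hdir1
    have hx1 : x + 1 ∈ B := heq ▸ (by simp)
    have := hsing _ hx1
    linarith
  obtain ⟨y, hyB, hyx⟩ := hy
  have hBeq : B = {x, y} := by
    apply Set.Subset.antisymm
    · intro z hz
      simp only [Set.mem_insert_iff, Set.mem_singleton_iff]
      by_contra hzz
      push_neg at hzz
      obtain ⟨hzx, hzy⟩ := hzz
      obtain ⟨k, hk⟩ := hodd z hz x hxB hzx
      obtain ⟨l, hl⟩ := hodd z hz y hyB hzy
      obtain ⟨m, hm⟩ := hodd y hyB x hxB hyx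
      omega
    · intro z hz
      simp only [Set.mem_insert_iff, Set.mem_singleton_iff] at hz
      rcases hz with rfl | rfl
      · exact hxB
      · exact hyB
  rw [hBeq]
  exact mk_pair (Ne.symm hyx)

lemma not_gd_primes (h : ¬ ∀ n : ℤ, Even n → n ∈ Primes - Primes) :
    ∃ B : Set ℤ, IsSubfactor Primes B ∧ 3 ≤ Cardinal.mk ↥B := by
  push_neg at h
  obtain ⟨n, hne, hnPP⟩ := h
  have hn0 : n ≠ 0 := by rintro rfl; exact hnPP zero_PP
  obtain ⟨a, b, hoa, hob, haPP, hbPP, hab⟩ := keyL hne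
  obtain ⟨ka, hka⟩ := hoa
  obtain ⟨kb, hkb⟩ := hob
  obtain ⟨mn, hmn⟩ := hne
  have h0n : (0 : ℤ) ≠ n := Ne.symm hn0
  have h0a : (0 : ℤ) ≠ a := by omega
  have hna : n ≠ a := by omega
  have hT : IsDirectSum Primes {0, n, a} := by
    rw [isDirectSum_iff]
    intro b₁ hb₁ b₂ hb₂ hmem
    simp only [Set.mem_insert_iff, Set.mem_singleton_iff] at hb₁ hb₂
    rcases hb₁ with h1 | h1 | h1 <;> rcases hb₂ with h2 | h2 | h2 <;>
      rw [h1, h2] at hmem ⊢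
    · exfalso; apply hnPP
      have := PP_neg hmem
      rwa [show -((0 : ℤ) - n) = n by ring] at this
    · exfalso; apply haPP
      have := PP_neg hmem
      rwa [show -((0 : ℤ) - a) = a by ring] at this
    · exfalso; apply hnPP
      rwa [show n - 0 = n by ring] at hmem
    · exfalso; apply hbPP
      rwa [show n - a = b by omega] at hmem
    · exfalso; apply haPP
      rwa [show a - 0 = a by ring] at hmem
    · exfalso; apply hbPP
      have := PP_neg hmem
      rwa [show -(a - n) = b by omega] at this
  obtain ⟨B, hsub, hBf⟩ := exists_subfactor_s16 hT
  refine ⟨B, hBf, ?_⟩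
  calc (3 : Cardinal) = Cardinal.mk ↥({0, n, a} : Set ℤ) := (mk_triple h0n h0a hna).symm
    _ ≤ Cardinal.mk ↥B := Cardinal.mk_le_mk_of_subset hsub

lemma not_gd_oddprimes (h : ¬ ∀ n : ℤ, Even n → n ∈ Primes - Primes) :
    ∃ B : Set ℤ, IsSubfactor OddPrimes B ∧ 3 ≤ Cardinal.mk ↥B := by
  push_neg at h
  obtain ⟨n, hne, hnPP⟩ := h
  have hn0 : n ≠ 0 := by rintro rfl; exact hnPP zero_PP
  have hnOPP : n ∉ OddPrimes - OddPrimes := fun h' => hnPP (OPP_subset_PP h')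
  obtain ⟨mn, hmn⟩ := hne
  have h0n : (0 : ℤ) ≠ n := Ne.symm hn0
  have h01 : (0 : ℤ) ≠ 1 := by norm_num
  have hn1 : n ≠ 1 := by omega
  have hT : IsDirectSum OddPrimes {0, n, 1} := by
    rw [isDirectSum_iff]
    intro b₁ hb₁ b₂ hb₂ hmem
    simp only [Set.mem_insert_iff, Set.mem_singleton_iff] at hb₁ hb₂
    rcases hb₁ with h1 | h1 | h1 <;> rcases hb₂ with h2 | h2 | h2 <;>
      rw [h1, h2] at hmem ⊢
    · exfalso; apply hnPP
      have := PP_neg (OPP_subset_PP hmem)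
      rwa [show -((0 : ℤ) - n) = n by ring] at this
    · exfalso
      rw [show (0 : ℤ) - 1 = -1 by ring] at hmem
      exact odd_not_OPP ⟨-1, by norm_num⟩ hmem
    · exfalso; apply hnOPP
      rwa [show n - 0 = n by ring] at hmem
    · exfalso
      exact odd_not_OPP ⟨mn - 1, by omega⟩ hmem
    · exfalso
      rw [show (1 : ℤ) - 0 = 1 by ring] at hmem
      exact odd_not_OPP ⟨0, by norm_num⟩ hmem
    · exfalso
      exact odd_not_OPP ⟨-mn, by omega⟩ hmem
  obtain ⟨B, hsub, hBf⟩ := exists_subfactor_s16 hT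
  refine ⟨B, hBf, ?_⟩
  calc (3 : Cardinal) = Cardinal.mk ↥({0, n, 1} : Set ℤ) := (mk_triple h0n h01 hn1).symm
    _ ≤ Cardinal.mk ↥B := Cardinal.mk_le_mk_of_subset hsub

/-! ### The six equivalences -/

lemma iff_b : (∀ n : ℤ, Even n → n ∈ Primes - Primes) ↔
    (∀ B : Set ℤ, IsSubfactor Primes B → Cardinal.mk ↥B = 2) := by
  constructor
  · intro hgd B hB
    exact gd_card_primes hgd hB
  · intro hb
    by_contra hgd
    obtain ⟨B, hBf, h3⟩ := not_gd_primes hgd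
    rw [hb B hBf] at h3
    exact absurd h3 (by norm_num)

lemma iff_c : (∀ n : ℤ, Even n → n ∈ Primes - Primes) ↔
    (∀ B : Set ℤ, IsSubfactor OddPrimes B → Cardinal.mk ↥B = 2) := by
  constructor
  · intro hgd B hB
    exact gd_card_oddprimes hgd hB
  · intro hb
    by_contra hgd
    obtain ⟨B, hBf, h3⟩ := not_gd_oddprimes hgd
    rw [hb B hBf] at h3
    exact absurd h3 (by norm_num)

lemma iff_d : (∀ n : ℤ, Even n → n ∈ Primes - Primes) ↔
    (∀ a b : ℤ, a ≠ b → a ≠ 0 → b ≠ 0 →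
      (a ∈ Primes - Primes ∨ b ∈ Primes - Primes ∨ a - b ∈ Primes - Primes)) := by
  constructor
  · intro hgd a b _ _ _
    by_cases ha : a ∈ Primes - Primes
    · exact Or.inl ha
    by_cases hb : b ∈ Primes - Primes
    · exact Or.inr (Or.inl hb)
    refine Or.inr (Or.inr ?_)
    have hoa : Odd a := by
      rcases Int.even_or_odd a with he | ho
      · exact absurd (hgd a he) ha
      · exact ho
    have hob : Odd b := by
      rcases Int.even_or_odd b with he | ho
      · exact absurd (hgd b he) hb
      · exact ho
    exact hgd _ (hoa.sub_odd hob)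
  · intro hd n hne
    by_cases h0 : n = 0
    · rw [h0]; exact zero_PP
    obtain ⟨a, b, hoa, hob, haPP, hbPP, hab⟩ := keyL hne
    obtain ⟨ka, hka⟩ := hoa
    obtain ⟨kb, hkb⟩ := hob
    have h1 : a ≠ -b := by intro h; apply h0; omega
    have h2 : a ≠ 0 := by omega
    have h3 : -b ≠ 0 := by omega
    rcases hd a (-b) h1 h2 h3 with h | h | h
    · exact absurd h haPP
    · exfalso; apply hbPP
      have := PP_neg h
      rwa [neg_neg] at this
    · rwa [show a - -b = n by omega] at h

lemma iff_e : (∀ n : ℤ, Even n → n ∈ Primes - Primes) ↔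
    (∀ a b : ℤ, a ∉ Primes - Primes → b ∉ Primes - Primes → a + b ∈ Primes - Primes) := by
  constructor
  · intro hgd a b ha hb
    have hoa : Odd a := by
      rcases Int.even_or_odd a with he | ho
      · exact absurd (hgd a he) ha
      · exact ho
    have hob : Odd b := by
      rcases Int.even_or_odd b with he | ho
      · exact absurd (hgd b he) hb
      · exact ho
    exact hgd _ (hoa.add_odd hob)
  · intro he n hne
    obtain ⟨a, b, _, _, haPP, hbPP, hab⟩ := keyL hne
    have := he a b haPP hbPP
    rwa [hab] at this

lemma iff_f : (∀ n : ℤ, Even n → n ∈ Primes - Primes) ↔ upperIndex Primes = 2 := by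
  constructor
  · intro hgd
    have hset : {c | ∃ B : Set ℤ, IsSubfactor Primes B ∧ c = Cardinal.mk ↥B} = {2} := by
      ext c
      simp only [Set.mem_setOf_eq, Set.mem_singleton_iff]
      constructor
      · rintro ⟨B, hB, rfl⟩
        exact gd_card_primes hgd hB
      · rintro rfl
        obtain ⟨B, _, hBf⟩ := exists_subfactor_s16 (isDirectSum_singleton Primes 0)
        exact ⟨B, hBf, (gd_card_primes hgd hBf).symm⟩
    rw [upperIndex, hset, csSup_singleton]
  · intro hf
    by_contra hgd
    obtain ⟨B, hBf, h3⟩ := not_gd_primes hgd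
    have hbdd : BddAbove {c | ∃ B : Set ℤ, IsSubfactor Primes B ∧ c = Cardinal.mk ↥B} := by
      refine ⟨Cardinal.mk ℤ, ?_⟩
      rintro c ⟨B', _, rfl⟩
      exact Cardinal.mk_set_le B'
    have hle : Cardinal.mk ↥B ≤ upperIndex Primes := le_csSup hbdd ⟨B, hBf, rfl⟩
    rw [hf] at hle
    exact absurd (le_trans h3 hle) (by norm_num)

lemma iff_g : (∀ n : ℤ, Even n → n ∈ Primes - Primes) ↔ upperIndex OddPrimes = 2 := by
  constructor
  · intro hgd
    have hset : {c | ∃ B : Set ℤ, IsSubfactor OddPrimes B ∧ c = Cardinal.mk ↥B} = {2} := by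
      ext c
      simp only [Set.mem_setOf_eq, Set.mem_singleton_iff]
      constructor
      · rintro ⟨B, hB, rfl⟩
        exact gd_card_oddprimes hgd hB
      · rintro rfl
        obtain ⟨B, _, hBf⟩ := exists_subfactor_s16 (isDirectSum_singleton OddPrimes 0)
        exact ⟨B, hBf, (gd_card_oddprimes hgd hBf).symm⟩
    rw [upperIndex, hset, csSup_singleton]
  · intro hf
    by_contra hgd
    obtain ⟨B, hBf, h3⟩ := not_gd_oddprimes hgd
    have hbdd : BddAbove {c | ∃ B : Set ℤ, IsSubfactor OddPrimes B ∧ c = Cardinal.mk ↥B} := by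
      refine ⟨Cardinal.mk ℤ, ?_⟩
      rintro c ⟨B', _, rfl⟩
      exact Cardinal.mk_set_le B'
    have hle : Cardinal.mk ↥B ≤ upperIndex OddPrimes := le_csSup hbdd ⟨B, hBf, rfl⟩
    rw [hf] at hle
    exact absurd (le_trans h3 hle) (by norm_num)

theorem stmt16 :
    ((∀ n : ℤ, Even n → n ∈ Primes - Primes) ↔
      (∀ B : Set ℤ, IsSubfactor Primes B → Cardinal.mk ↥B = 2)) ∧
    ((∀ n : ℤ, Even n → n ∈ Primes - Primes) ↔
      (∀ B : Set ℤ, IsSubfactor OddPrimes B → Cardinal.mk ↥B = 2)) ∧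
    ((∀ n : ℤ, Even n → n ∈ Primes - Primes) ↔
      (∀ a b : ℤ, a ≠ b → a ≠ 0 → b ≠ 0 →
        (a ∈ Primes - Primes ∨ b ∈ Primes - Primes ∨ a - b ∈ Primes - Primes))) ∧
    ((∀ n : ℤ, Even n → n ∈ Primes - Primes) ↔
      (∀ a b : ℤ, a ∉ Primes - Primes → b ∉ Primes - Primes → a + b ∈ Primes - Primes)) ∧
    ((∀ n : ℤ, Even n → n ∈ Primes - Primes) ↔ upperIndex Primes = 2) ∧
    ((∀ n : ℤ, Even n → n ∈ Primes - Primes) ↔ upperIndex OddPrimes = 2) :=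
  ⟨iff_b, iff_c, iff_d, iff_e, iff_f, iff_g⟩
end
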